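/- arXiv:math/0410166 — 5 statements merged into one kernel-verified Lean document; each statement's English description precedes it below -/
import Mathlib

section
/- Let ζ̂ be a nonnegative random variable defined on the same probability space as (ζ,V) and let σ : ℝ₊ → [0,1] be a function such that identity (3.2) holds. Then ℙ(ζ̂ ≤ ζ) = 1, ℙ(ζ̂ ≤ t, ζ > t) = σ(t) for every t ∈ ℝ₊, and for every t ∈ ℝ₊ with σ(t) > 0 the conditional distribution of (ζ − t, V) given the event {ζ̂ ≤ t, ζ > t} equals ν_γ × μ. -/
open MeasureTheory ProbabilityTheory Real Set

/-- The exponential distribution on `[0, ∞)` with mean `γ⁻¹` (rate `γ`), as a measure on `ℝ`. -/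
noncomputable def expν (γ : ℝ) : Measure ℝ :=
  MeasureTheory.volume.withDensity
    (fun x => if 0 ≤ x then ENNReal.ofReal (γ * Real.exp (-γ * x)) else 0)

lemma expν_eq (γ : ℝ) : expν γ = MeasureTheory.volume.withDensity (exponentialPDF γ) := by
  unfold expν
  congr 1
  funext x
  rw [exponentialPDF_eq]
  split_ifs with h
  · rw [neg_mul]
  · simp

lemma expν_Iic (γ : ℝ) (hγ : 0 < γ) (v : ℝ) :
    expν γ (Iic v) = ENNReal.ofReal (if 0 ≤ v then 1 - Real.exp (-(γ * v)) else 0) := by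
  rw [expν_eq, withDensity_apply _ measurableSet_Iic,
    lintegral_exponentialPDF_eq_antiDeriv hγ]

lemma expν_prob (γ : ℝ) (hγ : 0 < γ) : IsProbabilityMeasure (expν γ) := by
  constructor
  rw [expν_eq, withDensity_apply _ MeasurableSet.univ, Measure.restrict_univ,
    lintegral_exponentialPDF_eq_one hγ]

/-- Theorem 3.1 (properties part): if a nonnegative `ζ̂` and `σ : ℝ₊ → [0,1]` satisfy
identity (3.2), then `ℙ(ζ̂ ≤ ζ) = 1`, `ℙ(ζ̂ ≤ t, ζ > t) = σ(t)`, and for `t` with `σ(t) > 0`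
the conditional law of `(ζ − t, V)` given `{ζ̂ ≤ t, ζ > t}` is `ν_γ × μ`. -/
theorem stmt_1 {Ω : Type*} [MeasurableSpace Ω] (P : Measure Ω) [IsProbabilityMeasure P]
    {S : Type*} [MeasurableSpace S] (μ : Measure S) [IsProbabilityMeasure μ]
    (γ : ℝ) (hγ : 0 < γ)
    (ζ : Ω → ℝ) (V : Ω → S) (hζm : Measurable ζ) (hVm : Measurable V)
    (hζ0 : ∀ ω, 0 ≤ ζ ω)
    (ζhat : Ω → ℝ) (hζhatm : Measurable ζhat) (hζhat0 : ∀ ω, 0 ≤ ζhat ω)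
    (σ : ℝ → ℝ) (hσ01 : ∀ t, 0 ≤ t → σ t ∈ Set.Icc (0 : ℝ) 1)
    (h32 : ∀ t u, 0 ≤ t → 0 ≤ u → ∀ A : Set S, MeasurableSet A →
      P {ω | ζhat ω ≤ t ∧ ζ ω ≤ u ∧ V ω ∈ A} =
        P {ω | ζ ω ≤ min t u ∧ V ω ∈ A} +
          ENNReal.ofReal (σ t * (1 - Real.exp (-γ * max (u - t) 0))) * μ A) :
    P {ω | ζhat ω ≤ ζ ω} = 1 ∧
    (∀ t, 0 ≤ t → P {ω | ζhat ω ≤ t ∧ t < ζ ω} = ENNReal.ofReal (σ t)) ∧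
    (∀ t, 0 ≤ t → 0 < σ t →
      Measure.map (fun ω => (ζ ω - t, V ω)) (P[|{ω | ζhat ω ≤ t ∧ t < ζ ω}]) =
        (expν γ).prod μ) := by
  -- the "small set" identity: P {ζhat ≤ t, ζ ≤ t, V ∈ A} = P {ζ ≤ t, V ∈ A}
  have hsmall : ∀ t, 0 ≤ t → ∀ A : Set S, MeasurableSet A →
      P {ω | ζhat ω ≤ t ∧ ζ ω ≤ t ∧ V ω ∈ A} = P {ω | ζ ω ≤ t ∧ V ω ∈ A} := by
    intro t ht A hA
    have h := h32 t t ht ht A hA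
    simp only [min_self, sub_self, max_self, mul_zero, neg_zero, Real.exp_zero, sub_self,
      mul_zero, ENNReal.ofReal_zero, zero_mul, add_zero] at h
    exact h
  -- key : measure of the slab
  have hkey : ∀ t u, 0 ≤ t → t ≤ u → ∀ A : Set S, MeasurableSet A →
      P {ω | ζhat ω ≤ t ∧ t < ζ ω ∧ ζ ω ≤ u ∧ V ω ∈ A} =
        ENNReal.ofReal (σ t * (1 - Real.exp (-γ * (u - t)))) * μ A := by
    intro t u ht htu A hA
    have hu : 0 ≤ u := ht.trans htu
    have hmeas : MeasurableSet {ω | ζhat ω ≤ t ∧ ζ ω ≤ t ∧ V ω ∈ A} :=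
      (hζhatm measurableSet_Iic).inter ((hζm measurableSet_Iic).inter (hVm hA))
    have hseteq : {ω | ζhat ω ≤ t ∧ t < ζ ω ∧ ζ ω ≤ u ∧ V ω ∈ A} =
        {ω | ζhat ω ≤ t ∧ ζ ω ≤ u ∧ V ω ∈ A} \ {ω | ζhat ω ≤ t ∧ ζ ω ≤ t ∧ V ω ∈ A} := by
      ext ω
      simp only [mem_diff, mem_setOf_eq]
      constructor
      · rintro ⟨h1, h2, h3, h4⟩
        exact ⟨⟨h1, h3, h4⟩, fun hb => absurd hb.2.1 (not_le.2 h2)⟩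
      · rintro ⟨⟨h1, h3, h4⟩, hb⟩
        refine ⟨h1, ?_, h3, h4⟩
        by_contra h
        push_neg at h
        exact hb ⟨h1, h, h4⟩
    have hsub : {ω | ζhat ω ≤ t ∧ ζ ω ≤ t ∧ V ω ∈ A} ⊆
        {ω | ζhat ω ≤ t ∧ ζ ω ≤ u ∧ V ω ∈ A} := by
      rintro ω ⟨h1, h2, h3⟩; exact ⟨h1, h2.trans htu, h3⟩
    rw [hseteq, measure_diff hsub hmeas.nullMeasurableSet (measure_ne_top P _),
      h32 t u ht hu A hA, hsmall t ht A hA, min_eq_left htu,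
      max_eq_left (by linarith : (0:ℝ) ≤ u - t), ENNReal.add_sub_cancel_left (measure_ne_top P _)]
  -- part 2 with general A
  have hP2 : ∀ t, 0 ≤ t → ∀ A : Set S, MeasurableSet A →
      P {ω | ζhat ω ≤ t ∧ t < ζ ω ∧ V ω ∈ A} = ENNReal.ofReal (σ t) * μ A := by
    intro t ht A hA
    set s : ℕ → Set Ω := fun n => {ω | ζhat ω ≤ t ∧ t < ζ ω ∧ ζ ω ≤ t + n ∧ V ω ∈ A} with hs
    have hmono : Monotone s := by
      intro n m hnm ω hω
      obtain ⟨h1, h2, h3, h4⟩ := hω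
      exact ⟨h1, h2, h3.trans (by exact_mod_cast add_le_add_right (Nat.cast_le.2 hnm) t), h4⟩
    have hUnion : (⋃ n, s n) = {ω | ζhat ω ≤ t ∧ t < ζ ω ∧ V ω ∈ A} := by
      ext ω
      simp only [mem_iUnion, hs, mem_setOf_eq]
      constructor
      · rintro ⟨n, h1, h2, _, h4⟩; exact ⟨h1, h2, h4⟩
      · rintro ⟨h1, h2, h4⟩
        obtain ⟨n, hn⟩ := exists_nat_ge (ζ ω - t)
        exact ⟨n, h1, h2, by linarith, h4⟩
    have htendsto := tendsto_measure_iUnion_atTop (μ := P) hmono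
    rw [hUnion] at htendsto
    have hval : ∀ n : ℕ, P (s n) = ENNReal.ofReal (σ t * (1 - Real.exp (-γ * n))) * μ A := by
      intro n
      have := hkey t (t + n) ht (le_add_of_nonneg_right (Nat.cast_nonneg n)) A hA
      simpa using this
    have htendsto2 : Filter.Tendsto (fun n : ℕ =>
        ENNReal.ofReal (σ t * (1 - Real.exp (-γ * n))) * μ A) Filter.atTop
        (nhds (ENNReal.ofReal (σ t) * μ A)) := by
      have h1 : Filter.Tendsto (fun n : ℕ => σ t * (1 - Real.exp (-γ * n))) Filter.atTop
          (nhds (σ t)) := by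
        have h2 : Filter.Tendsto (fun n : ℕ => Real.exp (-γ * n)) Filter.atTop (nhds 0) := by
          exact Real.tendsto_exp_atBot.comp
            (Filter.Tendsto.const_mul_atTop_of_neg (neg_lt_zero.2 hγ) tendsto_natCast_atTop_atTop)
        have := (tendsto_const_nhds (x := σ t)).mul ((tendsto_const_nhds (x := (1:ℝ))).sub h2)
        simpa using this
      exact ENNReal.Tendsto.mul_const (ENNReal.tendsto_ofReal h1) (Or.inr (measure_ne_top μ A))
    have htendsto' : Filter.Tendsto (fun n : ℕ => P (s n)) Filter.atTop
        (nhds (P {ω | ζhat ω ≤ t ∧ t < ζ ω ∧ V ω ∈ A})) := htendsto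
    simp only [hval] at htendsto'
    exact tendsto_nhds_unique htendsto' htendsto2
  -- Part 1
  have hq : ∀ q : ℚ, P {ω | ζ ω ≤ (q : ℝ) ∧ (q : ℝ) < ζhat ω} = 0 := by
    intro q
    by_cases hq0 : (0 : ℝ) ≤ (q : ℝ)
    · have hsm := hsmall q hq0 univ MeasurableSet.univ
      simp only [mem_univ, and_true] at hsm
      have hmeas : MeasurableSet {ω | ζhat ω ≤ (q : ℝ) ∧ ζ ω ≤ (q : ℝ)} :=
        (hζhatm measurableSet_Iic).inter (hζm measurableSet_Iic)
      have hseteq : {ω | ζ ω ≤ (q : ℝ) ∧ (q : ℝ) < ζhat ω} =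
          {ω | ζ ω ≤ (q : ℝ)} \ {ω | ζhat ω ≤ (q : ℝ) ∧ ζ ω ≤ (q : ℝ)} := by
        ext ω
        simp only [mem_diff, mem_setOf_eq, not_and]
        constructor
        · rintro ⟨h1, h2⟩
          exact ⟨h1, fun hb => absurd h2 (not_lt.2 hb)⟩
        · rintro ⟨h1, h2⟩
          refine ⟨h1, ?_⟩
          by_contra h
          push_neg at h
          exact h2 h h1
      have hsub2 : {ω | ζhat ω ≤ (q : ℝ) ∧ ζ ω ≤ (q : ℝ)} ⊆ {ω | ζ ω ≤ (q : ℝ)} :=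
        fun ω hω => hω.2
      rw [hseteq, measure_diff hsub2 hmeas.nullMeasurableSet (measure_ne_top P _), hsm, tsub_self]
    · have : {ω | ζ ω ≤ (q : ℝ) ∧ (q : ℝ) < ζhat ω} = ∅ := by
        ext ω
        simp only [mem_setOf_eq, mem_empty_iff_false, iff_false, not_and]
        intro h
        exact absurd ((hζ0 ω).trans h) hq0
      rw [this, measure_empty]
  have hle : MeasurableSet {ω | ζhat ω ≤ ζ ω} := measurableSet_le hζhatm hζm
  have part1 : P {ω | ζhat ω ≤ ζ ω} = 1 := by
    rw [← prob_compl_eq_zero_iff hle]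
    refine le_antisymm ?_ zero_le
    have hsubset : {ω | ζhat ω ≤ ζ ω}ᶜ ⊆ ⋃ q : ℚ, {ω | ζ ω ≤ (q : ℝ) ∧ (q : ℝ) < ζhat ω} := by
      intro ω hω
      simp only [mem_compl_iff, mem_setOf_eq, not_le] at hω
      obtain ⟨q, h1, h2⟩ := exists_rat_btwn hω
      exact mem_iUnion.2 ⟨q, h1.le, h2⟩
    calc P {ω | ζhat ω ≤ ζ ω}ᶜ ≤ P (⋃ q : ℚ, {ω | ζ ω ≤ (q : ℝ) ∧ (q : ℝ) < ζhat ω}) :=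
          measure_mono hsubset
      _ ≤ ∑' q : ℚ, P {ω | ζ ω ≤ (q : ℝ) ∧ (q : ℝ) < ζhat ω} := measure_iUnion_le _
      _ = 0 := by simp [hq]
  -- Part 2
  have part2 : ∀ t, 0 ≤ t → P {ω | ζhat ω ≤ t ∧ t < ζ ω} = ENNReal.ofReal (σ t) := by
    intro t ht
    have := hP2 t ht univ MeasurableSet.univ
    simpa using this
  refine ⟨part1, part2, ?_⟩
  -- Part 3
  intro t ht hσt
  set E : Set Ω := {ω | ζhat ω ≤ t ∧ t < ζ ω} with hE
  have hEm : MeasurableSet E :=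
    (hζhatm measurableSet_Iic).inter (measurableSet_lt measurable_const hζm)
  have hPE : P E = ENNReal.ofReal (σ t) := part2 t ht
  have hPE0 : P E ≠ 0 := by
    rw [hPE]
    simpa using hσt
  have hf : Measurable (fun ω => (ζ ω - t, V ω)) := (hζm.sub_const t).prodMk hVm
  haveI : IsProbabilityMeasure (P[|E]) := cond_isProbabilityMeasure hPE0
  haveI : IsProbabilityMeasure (expν γ) := expν_prob γ hγ
  haveI : IsProbabilityMeasure (Measure.map (fun ω => (ζ ω - t, V ω)) (P[|E])) :=
    Measure.isProbabilityMeasure_map hf.aemeasurable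
  refine (Measure.prod_eq fun s A hs hA => ?_).symm
  -- reduce to Iic
  set m := Measure.map (fun ω => (ζ ω - t, V ω)) (P[|E]) with hm
  have hrect : ∀ v : ℝ, m (Iic v ×ˢ A) = expν γ (Iic v) * μ A := by
    intro v
    rw [hm, Measure.map_apply hf (measurableSet_Iic.prod hA)]
    have hpre : (fun ω => (ζ ω - t, V ω)) ⁻¹' (Iic v ×ˢ A) =
        {ω | ζ ω ≤ t + v ∧ V ω ∈ A} := by
      ext ω
      simp only [mem_preimage, mem_prod, mem_Iic, mem_setOf_eq, sub_le_iff_le_add']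
    rw [hpre, cond_apply hEm]
    by_cases hv : 0 ≤ v
    · have hEint : E ∩ {ω | ζ ω ≤ t + v ∧ V ω ∈ A} =
          {ω | ζhat ω ≤ t ∧ t < ζ ω ∧ ζ ω ≤ t + v ∧ V ω ∈ A} := by
        ext ω
        simp only [hE, mem_inter_iff, mem_setOf_eq]
        tauto
      rw [hEint, hkey t (t + v) ht (by linarith) A hA, hPE, expν_Iic γ hγ, if_pos hv]
      have hexp : Real.exp (-γ * (t + v - t)) = Real.exp (-(γ * v)) := by ring_nf
      rw [hexp, ENNReal.ofReal_mul (hσ01 t ht).1, ← mul_assoc, ← mul_assoc,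
        ENNReal.inv_mul_cancel (by simpa using hσt) ENNReal.ofReal_ne_top, one_mul]
    · have hEint : E ∩ {ω | ζ ω ≤ t + v ∧ V ω ∈ A} = ∅ := by
        ext ω
        simp only [hE, mem_inter_iff, mem_setOf_eq, mem_empty_iff_false, iff_false, not_and]
        rintro ⟨h1, h2⟩ h3 h4
        push_neg at hv
        linarith
      rw [hEint, measure_empty, mul_zero, expν_Iic γ hγ, if_neg hv, ENNReal.ofReal_zero,
        zero_mul]
  -- extend from Iic to all measurable sets via uniqueness of measures
  have hAm : MeasurableSet (Prod.snd ⁻¹' A : Set (ℝ × S)) := measurable_snd hA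
  set m₁ : Measure ℝ := Measure.map Prod.fst (m.restrict (Prod.snd ⁻¹' A)) with hm₁
  have hm₁app : ∀ s' : Set ℝ, MeasurableSet s' → m₁ s' = m (s' ×ˢ A) := by
    intro s' hs'
    rw [hm₁, Measure.map_apply measurable_fst hs', Measure.restrict_apply (measurable_fst hs'),
      Set.prod_eq]
  haveI : IsFiniteMeasure m₁ := by
    rw [hm₁]
    infer_instance
  have hm₂ : m₁ = (μ A) • (expν γ) := by
    refine Measure.ext_of_Iic m₁ ((μ A) • (expν γ)) fun v => ?_
    rw [hm₁app (Iic v) measurableSet_Iic, hrect v, Measure.smul_apply, smul_eq_mul, mul_comm]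
  rw [← hm₁app s hs, hm₂, Measure.smul_apply, smul_eq_mul, mul_comm]
end

section
/- Let ζ̂ be a nonnegative random variable defined on the same probability space as (ζ,V) and let σ : ℝ₊ → [0,1] be a function such that identity (3.2) holds and such that G(t) = σ(t)e^{γt} is nondecreasing on ℝ₊. Then for all t, u ∈ ℝ₊ and A ∈ 𝒮, ℙ(ζ̂ ∈ (0,t], 0 < ζ − ζ̂ ≤ u, V ∈ A) = μ(A)(1 − e^{−γu})(σ(t) − σ(0) + γ∫₀ᵗ σ(x) dx). -/
open MeasureTheory ProbabilityTheory Real Set Filter Topology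

lemma lm_exp_lb (x : ℝ) : 1 - x ≤ Real.exp (-x) := by
  linarith [Real.add_one_le_exp (-x)]

lemma lm_exp_lip {a b : ℝ} (ha : 0 ≤ a) (hab : a ≤ b) :
    Real.exp (-b) ≤ Real.exp (-a) ∧ Real.exp (-a) - Real.exp (-b) ≤ b - a := by
  constructor
  · exact Real.exp_le_exp.mpr (by linarith)
  · have h1 : Real.exp (-a) ≤ 1 := Real.exp_le_one_iff.mpr (by linarith)
    have h2 : 1 - (b - a) ≤ Real.exp (-(b - a)) := lm_exp_lb _
    have h3 : Real.exp (-b) = Real.exp (-a) * Real.exp (-(b-a)) := by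
      rw [← Real.exp_add]; ring_nf
    nlinarith [Real.exp_nonneg (-(b-a)), Real.exp_nonneg (-a)]

lemma lm_ii (f : ℝ → ℝ) (hm : Measurable f) (hb : ∀ x, f x ∈ Icc (0:ℝ) 1) (a b : ℝ) :
    IntervalIntegrable f volume a b := by
  apply IntervalIntegrable.mono_fun (_root_.intervalIntegrable_const (c := (1:ℝ)))
  · exact hm.aestronglyMeasurable.restrict
  · refine ae_of_all _ fun x => ?_
    simp only [Real.norm_eq_abs, abs_one, abs_le]
    exact ⟨by linarith [(hb x).1], (hb x).2⟩

-- Riemann sum bound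
lemma lm_rs (γ t : ℝ) (hγ : 0 < γ) (ht : 0 < t) (g f : ℝ → ℝ) (hg : Monotone g)
    (hg0 : ∀ x, 0 ≤ g x)
    (hfs : ∀ s : ℝ, 0 ≤ s → f s = g s * Real.exp (-(γ * s)))
    (hfmeas : Measurable f) (hf01 : ∀ x, f x ∈ Icc (0:ℝ) 1)
    (n : ℕ) (hn : 0 < n) :
    |(t / n) * (∑ k ∈ Finset.range n, f ((k:ℝ) * t / n)) - ∫ x in (0:ℝ)..t, f x|
      ≤ (t / n) * ((g t - g 0) + γ * t * g t) := by
  have hn' : ((n:ℝ)) ≠ 0 := Nat.cast_ne_zero.mpr hn.ne'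
  have hnn : (0:ℝ) < n := Nat.cast_pos.mpr hn
  have hii : ∀ a b : ℝ, IntervalIntegrable f volume a b := lm_ii f hfmeas hf01
  set δ := t / n with hδ
  have hδ0 : 0 < δ := by positivity
  -- split the integral
  have hsplit : ∫ x in (0:ℝ)..t, f x
      = ∑ k ∈ Finset.range n, ∫ x in ((k:ℝ) * t / n)..(((k:ℝ)+1) * t / n), f x := by
    have h := intervalIntegral.sum_integral_adjacent_intervals
      (a := fun k : ℕ => (k:ℝ) * t / n) (μ := volume) (n := n) (fun k _ => hii _ _)
    have hc : ∀ k : ℕ, (((k+1:ℕ):ℝ) * t / n) = ((k:ℝ)+1) * t / n := by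
      intro k; push_cast; ring
    simp only [hc] at h
    have h1 : ((0:ℕ):ℝ) * t / n = 0 := by norm_num
    have h2 : ((n:ℕ):ℝ) * t / n = t := by field_simp
    rw [h1, h2] at h
    rw [← h]
  -- per-cell bound
  have hterm : ∀ k ∈ Finset.range n,
      |δ * f ((k:ℝ) * t / n) - ∫ x in ((k:ℝ) * t / n)..(((k:ℝ)+1) * t / n), f x|
        ≤ δ * ((g (((k:ℝ)+1) * t / n) - g ((k:ℝ) * t / n)) + γ * δ * g t) := by
    intro k hk
    have hkn : (k:ℝ) + 1 ≤ n := by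
      have : (k:ℕ) < n := Finset.mem_range.mp hk
      exact_mod_cast Nat.succ_le_of_lt this
    set a := (k:ℝ) * t / n with ha
    set b := ((k:ℝ)+1) * t / n with hb
    have ha0 : 0 ≤ a := by positivity
    have hab : a ≤ b := by rw [ha, hb]; gcongr; linarith
    have hba : b - a = δ := by rw [ha, hb, hδ]; field_simp; ring
    have hbt : b ≤ t := by
      rw [hb]
      calc ((k:ℝ)+1) * t / n ≤ (n:ℝ) * t / n := by gcongr
        _ = t := by field_simp
    have hconst : δ * f a = ∫ _x in a..b, f a := by
      rw [intervalIntegral.integral_const, smul_eq_mul, hba]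
    rw [hconst, ← intervalIntegral.integral_sub (by exact _root_.intervalIntegrable_const) (hii a b)]
    have hbound : ∀ x ∈ Set.uIoc a b, ‖f a - f x‖ ≤
        (g b - g a) + γ * δ * g t := by
      intro x hx
      rw [Set.uIoc_of_le hab] at hx
      obtain ⟨hax, hxb⟩ := hx
      have hx0 : 0 ≤ x := le_trans ha0 hax.le
      have efa := hfs a ha0
      have efx := hfs x hx0
      have hgax : g a ≤ g x := hg hax.le
      have hgxb : g x ≤ g b := hg hxb
      have hgt : g x ≤ g t := hg (le_trans hxb hbt)
      have lip := lm_exp_lip (mul_nonneg hγ.le ha0)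
        (mul_le_mul_of_nonneg_left hax.le hγ.le)
      have hea1 : Real.exp (-(γ * a)) ≤ 1 :=
        Real.exp_le_one_iff.mpr (neg_nonpos.mpr (mul_nonneg hγ.le ha0))
      have hea0 : 0 ≤ Real.exp (-(γ * a)) := Real.exp_nonneg _
      have hex0 : 0 ≤ Real.exp (-(γ * x)) := Real.exp_nonneg _
      have hxa : x - a ≤ δ := by linarith
      set ea := Real.exp (-(γ * a))
      set ex := Real.exp (-(γ * x))
      have hgtδ : 0 ≤ γ * δ * g t := mul_nonneg (mul_nonneg hγ.le hδ0.le) (hg0 t)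
      have hba' : g a ≤ g b := hg hab
      rw [Real.norm_eq_abs, abs_le]
      constructor
      · -- f x - f a ≤ g b - g a + γδ g t
        have h1 : g x * ex ≤ g x * ea := mul_le_mul_of_nonneg_left lip.1 (hg0 x)
        have h2 : (g x - g a) * ea ≤ (g x - g a) * 1 :=
          mul_le_mul_of_nonneg_left hea1 (by linarith)
        rw [efa, efx]
        linarith [h1, h2, hgxb, hgtδ, hba']
      · -- f a - f x ≤ ...
        have h2' : g a * ea ≤ g x * ea := mul_le_mul_of_nonneg_right hgax hea0
        have h3 : g x * (ea - ex) ≤ g t * (ea - ex) :=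
          mul_le_mul_of_nonneg_right hgt (by linarith [lip.1])
        have h4 : g t * (ea - ex) ≤ g t * (γ * x - γ * a) :=
          mul_le_mul_of_nonneg_left lip.2 (hg0 t)
        have h5 : g t * (γ * x - γ * a) ≤ g t * (γ * δ) :=
          mul_le_mul_of_nonneg_left (by linarith [mul_le_mul_of_nonneg_left hxa hγ.le]) (hg0 t)
        rw [efa, efx]
        linarith [h2', h3, h4, h5, hba']
    have hnorm := intervalIntegral.norm_integral_le_of_norm_le_const hbound
    rw [Real.norm_eq_abs] at hnorm
    have habs : |b - a| = δ := by rw [hba]; exact abs_of_pos hδ0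
    rw [habs] at hnorm
    calc |∫ x in a..b, (f a - f x)| ≤ ((g b - g a) + γ * δ * g t) * δ := hnorm
      _ = δ * ((g b - g a) + γ * δ * g t) := by ring
  -- combine
  have hdiff : (t / n) * (∑ k ∈ Finset.range n, f ((k:ℝ) * t / n)) - ∫ x in (0:ℝ)..t, f x
      = ∑ k ∈ Finset.range n, (δ * f ((k:ℝ) * t / n)
          - ∫ x in ((k:ℝ) * t / n)..(((k:ℝ)+1) * t / n), f x) := by
    rw [hsplit, Finset.sum_sub_distrib, ← Finset.mul_sum]
  rw [hdiff]
  have tele : ∑ k ∈ Finset.range n, (g (((k:ℝ)+1) * t / n) - g ((k:ℝ) * t / n))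
      = g t - g 0 := by
    have h := Finset.sum_range_sub (fun k : ℕ => g ((k:ℝ) * t / n)) n
    have hc : ∀ k : ℕ, g (((k+1:ℕ):ℝ) * t / n) = g (((k:ℝ)+1) * t / n) := by
      intro k; push_cast; ring_nf
    simp only [hc] at h
    rw [h]
    have h1 : ((n:ℝ)) * t / n = t := by field_simp
    have h2 : ((0:ℕ):ℝ) * t / n = 0 := by norm_num
    rw [h1, h2]
  calc |∑ k ∈ Finset.range n, (δ * f ((k:ℝ) * t / n)
          - ∫ x in ((k:ℝ) * t / n)..(((k:ℝ)+1) * t / n), f x)|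
      ≤ ∑ k ∈ Finset.range n, |δ * f ((k:ℝ) * t / n)
          - ∫ x in ((k:ℝ) * t / n)..(((k:ℝ)+1) * t / n), f x| :=
        Finset.abs_sum_le_sum_abs _ _
    _ ≤ ∑ k ∈ Finset.range n, δ * ((g (((k:ℝ)+1) * t / n) - g ((k:ℝ) * t / n)) + γ * δ * g t) :=
        Finset.sum_le_sum hterm
    _ = (t / n) * ((g t - g 0) + γ * t * g t) := by
        rw [← Finset.mul_sum, Finset.sum_add_distrib, Finset.sum_const, Finset.card_range,
          nsmul_eq_mul, tele, hδ]
        field_simp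

lemma lm_exp_ub {x : ℝ} (hx : 0 ≤ x) : Real.exp (-x) ≤ 1 - x + x ^ 2 := by
  have h1 : (0:ℝ) < 1 + x := by linarith
  have h2 : 1 + x ≤ Real.exp x := by linarith [Real.add_one_le_exp x]
  have h3 : Real.exp (-x) ≤ (1 + x)⁻¹ := by
    rw [Real.exp_neg]
    exact inv_anti₀ h1 h2
  have h4 : (1 + x)⁻¹ ≤ 1 - x + x ^ 2 := by
    rw [inv_le_iff_one_le_mul₀ h1]
    nlinarith
  linarith

-- telescoping identity
lemma lm_tele (γ t : ℝ) (g f : ℝ → ℝ)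
    (hfs : ∀ s : ℝ, 0 ≤ s → f s = g s * Real.exp (-(γ * s)))
    (ht : 0 ≤ t) (n : ℕ) (hn : 0 < n) :
    ∑ k ∈ Finset.range n, Real.exp (-(γ * (((k:ℝ)+1) * t / n))) *
        (g (((k:ℝ)+1) * t / n) - g ((k:ℝ) * t / n))
      = f t - f 0 + (1 - Real.exp (-(γ * (t / n)))) *
          ∑ k ∈ Finset.range n, f ((k:ℝ) * t / n) := by
  have hn' : ((n:ℝ)) ≠ 0 := Nat.cast_ne_zero.mpr hn.ne'
  have hnn : (0:ℝ) < n := Nat.cast_pos.mpr hn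
  have key : ∀ k : ℕ, Real.exp (-(γ * (((k:ℝ)+1) * t / n))) *
        (g (((k:ℝ)+1) * t / n) - g ((k:ℝ) * t / n))
      = (f (((k:ℝ)+1) * t / n) - f ((k:ℝ) * t / n))
        + f ((k:ℝ) * t / n) * (1 - Real.exp (-(γ * (t / n)))) := by
    intro k
    have h0k : 0 ≤ (k:ℝ) * t / n := by positivity
    have h0k1 : 0 ≤ ((k:ℝ)+1) * t / n := by positivity
    have e1 := hfs _ h0k1
    have e2 := hfs _ h0k
    have e3 : Real.exp (-(γ * (((k:ℝ)+1) * t / n)))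
        = Real.exp (-(γ * ((k:ℝ) * t / n))) * Real.exp (-(γ * (t / n))) := by
      rw [← Real.exp_add]; congr 1; field_simp; ring
    rw [e1, e2, e3]; ring
  rw [Finset.sum_congr rfl (fun k _ => key k), Finset.sum_add_distrib]
  have tele : ∑ k ∈ Finset.range n,
      (f (((k:ℝ)+1) * t / n) - f ((k:ℝ) * t / n)) = f t - f 0 := by
    have h := Finset.sum_range_sub (fun k : ℕ => f ((k:ℝ) * t / n)) n
    have hc : ∀ k : ℕ, f (((k+1:ℕ):ℝ) * t / n) = f (((k:ℝ)+1) * t / n) := by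
      intro k; push_cast; ring_nf
    simp only [hc] at h
    rw [h]
    have h1 : ((n:ℝ)) * t / n = t := by field_simp
    have h2 : ((0:ℕ):ℝ) * t / n = 0 := by norm_num
    rw [h1, h2]
  rw [tele, ← Finset.sum_mul, mul_comm]

-- the limit lemma
lemma lm_lim (γ t : ℝ) (hγ : 0 < γ) (ht : 0 < t) (g f : ℝ → ℝ) (hg : Monotone g)
    (hg0 : ∀ x, 0 ≤ g x)
    (hfs : ∀ s : ℝ, 0 ≤ s → f s = g s * Real.exp (-(γ * s)))
    (hfmeas : Measurable f) (hf01 : ∀ x, f x ∈ Icc (0:ℝ) 1) :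
    Filter.Tendsto (fun n : ℕ => ∑ k ∈ Finset.range (n+1),
        Real.exp (-(γ * (((k:ℝ)+1) * t / ((n:ℝ)+1)))) *
          (g (((k:ℝ)+1) * t / ((n:ℝ)+1)) - g ((k:ℝ) * t / ((n:ℝ)+1))))
      Filter.atTop (𝓝 (f t - f 0 + γ * ∫ x in (0:ℝ)..t, f x)) := by
  have hcast : ∀ n : ℕ, ((n+1:ℕ):ℝ) = (n:ℝ)+1 := by intro n; push_cast; ring
  -- rewrite via telescoping
  have hQ : ∀ n : ℕ, ∑ k ∈ Finset.range (n+1),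
        Real.exp (-(γ * (((k:ℝ)+1) * t / ((n:ℝ)+1)))) *
          (g (((k:ℝ)+1) * t / ((n:ℝ)+1)) - g ((k:ℝ) * t / ((n:ℝ)+1)))
      = f t - f 0 + (1 - Real.exp (-(γ * (t / ((n:ℝ)+1))))) *
          ∑ k ∈ Finset.range (n+1), f ((k:ℝ) * t / ((n:ℝ)+1)) := by
    intro n
    have := lm_tele γ t g f hfs ht.le (n+1) (Nat.succ_pos n)
    simpa only [hcast] using this
  simp only [hQ]
  have hmain : Filter.Tendsto (fun n : ℕ =>
      (1 - Real.exp (-(γ * (t / ((n:ℝ)+1))))) *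
        ∑ k ∈ Finset.range (n+1), f ((k:ℝ) * t / ((n:ℝ)+1)))
      Filter.atTop (𝓝 (γ * ∫ x in (0:ℝ)..t, f x)) := by
    set C : ℝ := (g t - g 0) + γ * t * g t with hC
    have hC0 : 0 ≤ C := by
      have h1 : g 0 ≤ g t := hg ht.le
      have h2 : 0 ≤ γ * t * g t := mul_nonneg (mul_nonneg hγ.le ht.le) (hg0 t)
      linarith
    have hkey : ∀ n : ℕ,
        ‖(1 - Real.exp (-(γ * (t / ((n:ℝ)+1))))) *
            (∑ k ∈ Finset.range (n+1), f ((k:ℝ) * t / ((n:ℝ)+1)))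
          - γ * ∫ x in (0:ℝ)..t, f x‖
        ≤ (γ * t * C + γ^2 * t^2) / ((n:ℝ)+1) := by
      intro n
      set m : ℕ := n + 1 with hm
      have hmpos : 0 < m := Nat.succ_pos n
      have hmr : ((m:ℕ):ℝ) = (n:ℝ)+1 := hcast n
      have hmr0 : (0:ℝ) < (n:ℝ)+1 := by positivity
      set δ := t / ((n:ℝ)+1) with hδ
      have hδ0 : 0 < δ := by positivity
      set Sn := ∑ k ∈ Finset.range (n+1), f ((k:ℝ) * t / ((n:ℝ)+1)) with hSn
      have hS0 : 0 ≤ Sn := Finset.sum_nonneg fun k _ => (hf01 _).1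
      have hS1 : Sn ≤ (n:ℝ)+1 := by
        calc Sn ≤ ∑ _k ∈ Finset.range (n+1), (1:ℝ) :=
              Finset.sum_le_sum fun k _ => (hf01 _).2
          _ = (n:ℝ)+1 := by
              rw [Finset.sum_const, Finset.card_range, nsmul_eq_mul, mul_one]; push_cast; ring
      -- bound on |1 - e^{-γδ} - γδ|
      have hx0 : 0 ≤ γ * δ := by positivity
      have he1 : 1 - γ * δ ≤ Real.exp (-(γ * δ)) := lm_exp_lb _
      have he2 : Real.exp (-(γ * δ)) ≤ 1 - γ * δ + (γ * δ)^2 := lm_exp_ub hx0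
      -- Riemann bound
      have hB := lm_rs γ t hγ ht g f hg hg0 hfs hfmeas hf01 (n+1) (Nat.succ_pos n)
      rw [show (((n+1:ℕ)):ℝ) = (n:ℝ)+1 from hcast n] at hB
      -- decompose
      have hdec : (1 - Real.exp (-(γ * δ))) * Sn - γ * ∫ x in (0:ℝ)..t, f x
          = ((1 - Real.exp (-(γ * δ))) - γ * δ) * Sn
            + γ * (δ * Sn - ∫ x in (0:ℝ)..t, f x) := by ring
      rw [Real.norm_eq_abs, hdec]
      have h1 : |((1 - Real.exp (-(γ * δ))) - γ * δ) * Sn| ≤ (γ*δ)^2 * ((n:ℝ)+1) := by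
        rw [abs_mul]
        have ha : |(1 - Real.exp (-(γ * δ))) - γ * δ| ≤ (γ*δ)^2 := by
          rw [abs_le]; constructor <;> linarith
        have hb : |Sn| ≤ (n:ℝ)+1 := by rw [abs_of_nonneg hS0]; exact hS1
        exact mul_le_mul ha hb (abs_nonneg _) (by positivity)
      have h2 : |γ * (δ * Sn - ∫ x in (0:ℝ)..t, f x)| ≤ γ * (δ * C) := by
        rw [abs_mul, abs_of_pos hγ]
        exact mul_le_mul_of_nonneg_left hB hγ.le
      calc |((1 - Real.exp (-(γ * δ))) - γ * δ) * Sn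
            + γ * (δ * Sn - ∫ x in (0:ℝ)..t, f x)|
          ≤ |((1 - Real.exp (-(γ * δ))) - γ * δ) * Sn|
            + |γ * (δ * Sn - ∫ x in (0:ℝ)..t, f x)| := abs_add_le _ _
        _ ≤ (γ*δ)^2 * ((n:ℝ)+1) + γ * (δ * C) := add_le_add h1 h2
        _ = (γ * t * C + γ^2 * t^2) / ((n:ℝ)+1) := by
            rw [hδ]; field_simp; ring
    have hb0 : Filter.Tendsto (fun n : ℕ => (γ * t * C + γ^2 * t^2) / ((n:ℝ)+1))
        Filter.atTop (𝓝 0) := by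
      have := tendsto_one_div_add_atTop_nhds_zero_nat (𝕜 := ℝ)
      have h := this.const_mul (γ * t * C + γ^2 * t^2)
      rw [mul_zero] at h
      refine h.congr fun n => ?_
      rw [mul_one_div]
    have hz := squeeze_zero_norm hkey hb0
    have := hz.add_const (γ * ∫ x in (0:ℝ)..t, f x)
    rw [zero_add] at this
    refine this.congr fun n => ?_
    ring
  have := hmain.const_add (f t - f 0)
  exact this


section
variable {Ω : Type*} [MeasurableSpace Ω] (P : Measure Ω) [IsProbabilityMeasure P]
    {S : Type*} [MeasurableSpace S] (μ : Measure S) [IsProbabilityMeasure μ]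
    (γ : ℝ) (ζ : Ω → ℝ) (V : Ω → S) (ζhat : Ω → ℝ) (σ : ℝ → ℝ)

lemma keyA (hγ : 0 < γ) (hζm : Measurable ζ) (hVm : Measurable V) (hζhatm : Measurable ζhat)
    (hσ01 : ∀ t, 0 ≤ t → σ t ∈ Set.Icc (0 : ℝ) 1)
    (h32 : ∀ t u, 0 ≤ t → 0 ≤ u → ∀ A : Set S, MeasurableSet A →
      P {ω | ζhat ω ≤ t ∧ ζ ω ≤ u ∧ V ω ∈ A} =
        P {ω | ζ ω ≤ min t u ∧ V ω ∈ A} +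
          ENNReal.ofReal (σ t * (1 - Real.exp (-γ * max (u - t) 0))) * μ A)
    (A : Set S) (hA : MeasurableSet A)
    (s1 s2 a b : ℝ) (h01 : 0 ≤ s1) (h12 : s1 ≤ s2) (h2a : s2 ≤ a) (hab : a ≤ b)
    (hG : σ s1 * Real.exp (γ * s1) ≤ σ s2 * Real.exp (γ * s2)) :
    P {ω | s1 < ζhat ω ∧ ζhat ω ≤ s2 ∧ a < ζ ω ∧ ζ ω ≤ b ∧ V ω ∈ A}
      = ENNReal.ofReal ((Real.exp (-(γ * a)) - Real.exp (-(γ * b))) *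
          (σ s2 * Real.exp (γ * s2) - σ s1 * Real.exp (γ * s1))) * μ A := by
  have heab : Real.exp (-(γ * b)) ≤ Real.exp (-(γ * a)) :=
    Real.exp_le_exp.mpr (by nlinarith)
  -- Step 1
  have hX : ∀ s, 0 ≤ s → s ≤ a →
      P {ω | ζhat ω ≤ s ∧ a < ζ ω ∧ ζ ω ≤ b ∧ V ω ∈ A}
        = ENNReal.ofReal ((Real.exp (-(γ * a)) - Real.exp (-(γ * b))) *
            (σ s * Real.exp (γ * s))) * μ A := by
    intro s hs hsa
    have hsb : s ≤ b := hsa.trans hab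
    have h0a : 0 ≤ a := hs.trans hsa
    have h0b : 0 ≤ b := h0a.trans hab
    have hu1 := h32 s a hs h0a A hA
    have hu2 := h32 s b hs h0b A hA
    rw [min_eq_left hsa, max_eq_left (by linarith : (0:ℝ) ≤ a - s)] at hu1
    rw [min_eq_left hsb, max_eq_left (by linarith : (0:ℝ) ≤ b - s)] at hu2
    have hset : {ω | ζhat ω ≤ s ∧ ζ ω ≤ b ∧ V ω ∈ A}
        = {ω | ζhat ω ≤ s ∧ ζ ω ≤ a ∧ V ω ∈ A}
          ∪ {ω | ζhat ω ≤ s ∧ a < ζ ω ∧ ζ ω ≤ b ∧ V ω ∈ A} := by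
      ext ω
      simp only [mem_setOf_eq, mem_union]
      constructor
      · rintro ⟨h1, h2, h3⟩
        rcases le_or_gt (ζ ω) a with h | h
        exacts [Or.inl ⟨h1, h, h3⟩, Or.inr ⟨h1, h, h2, h3⟩]
      · rintro (⟨h1, h2, h3⟩ | ⟨h1, h2, h3, h4⟩)
        exacts [⟨h1, h2.trans hab, h3⟩, ⟨h1, h3, h4⟩]
    have hdisj : Disjoint {ω | ζhat ω ≤ s ∧ ζ ω ≤ a ∧ V ω ∈ A}
        {ω | ζhat ω ≤ s ∧ a < ζ ω ∧ ζ ω ≤ b ∧ V ω ∈ A} := by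
      rw [Set.disjoint_left]
      rintro ω ⟨_, h2, _⟩ ⟨_, h2', _⟩
      linarith
    have hm2 : MeasurableSet {ω | ζhat ω ≤ s ∧ a < ζ ω ∧ ζ ω ≤ b ∧ V ω ∈ A} :=
      (hζhatm measurableSet_Iic).inter ((hζm measurableSet_Ioi).inter
        ((hζm measurableSet_Iic).inter (hVm hA)))
    have hPE : P {ω | ζhat ω ≤ s ∧ ζ ω ≤ a ∧ V ω ∈ A}
        + P {ω | ζhat ω ≤ s ∧ a < ζ ω ∧ ζ ω ≤ b ∧ V ω ∈ A}
        = P {ω | ζhat ω ≤ s ∧ ζ ω ≤ b ∧ V ω ∈ A} := by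
      rw [hset, measure_union hdisj hm2]
    rw [hu1, hu2] at hPE
    rw [add_assoc] at hPE
    have h6 := (ENNReal.add_right_inj (measure_ne_top P _)).mp hPE
    have hσs0 : 0 ≤ σ s := (hσ01 s hs).1
    have he_as : Real.exp (-γ * (a - s)) ≤ 1 :=
      Real.exp_le_one_iff.mpr (by nlinarith)
    have hre : σ s * (1 - Real.exp (-γ * (b - s)))
        = σ s * (1 - Real.exp (-γ * (a - s)))
          + (Real.exp (-(γ * a)) - Real.exp (-(γ * b))) * (σ s * Real.exp (γ * s)) := by
      have e1 : Real.exp (-(γ * a)) * Real.exp (γ * s) = Real.exp (-γ * (a - s)) := by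
        rw [← Real.exp_add]; congr 1; ring
      have e2 : Real.exp (-(γ * b)) * Real.exp (γ * s) = Real.exp (-γ * (b - s)) := by
        rw [← Real.exp_add]; congr 1; ring
      linear_combination (σ s) * e2 - (σ s) * e1
    rw [hre, ENNReal.ofReal_add (mul_nonneg hσs0 (by linarith))
      (mul_nonneg (by linarith) (mul_nonneg hσs0 (Real.exp_pos _).le)), add_mul] at h6
    exact (ENNReal.add_right_inj
      (ENNReal.mul_ne_top ENNReal.ofReal_ne_top (measure_ne_top μ A))).mp h6
  -- Step 2
  have hX1 := hX s1 h01 (h12.trans h2a)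
  have hX2 := hX s2 (h01.trans h12) h2a
  have hset : {ω | ζhat ω ≤ s2 ∧ a < ζ ω ∧ ζ ω ≤ b ∧ V ω ∈ A}
      = {ω | ζhat ω ≤ s1 ∧ a < ζ ω ∧ ζ ω ≤ b ∧ V ω ∈ A}
        ∪ {ω | s1 < ζhat ω ∧ ζhat ω ≤ s2 ∧ a < ζ ω ∧ ζ ω ≤ b ∧ V ω ∈ A} := by
    ext ω
    simp only [mem_setOf_eq, mem_union]
    constructor
    · rintro ⟨h1, h2, h3, h4⟩
      rcases le_or_gt (ζhat ω) s1 with h | h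
      exacts [Or.inl ⟨h, h2, h3, h4⟩, Or.inr ⟨h, h1, h2, h3, h4⟩]
    · rintro (⟨h1, h2, h3, h4⟩ | ⟨h1, h2, h3, h4, h5⟩)
      exacts [⟨h1.trans h12, h2, h3, h4⟩, ⟨h2, h3, h4, h5⟩]
  have hdisj : Disjoint {ω | ζhat ω ≤ s1 ∧ a < ζ ω ∧ ζ ω ≤ b ∧ V ω ∈ A}
      {ω | s1 < ζhat ω ∧ ζhat ω ≤ s2 ∧ a < ζ ω ∧ ζ ω ≤ b ∧ V ω ∈ A} := by
    rw [Set.disjoint_left]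
    rintro ω ⟨h1, _⟩ ⟨h1', _⟩
    linarith
  have hm2 : MeasurableSet {ω | s1 < ζhat ω ∧ ζhat ω ≤ s2 ∧ a < ζ ω ∧ ζ ω ≤ b ∧ V ω ∈ A} :=
    (hζhatm measurableSet_Ioi).inter ((hζhatm measurableSet_Iic).inter
      ((hζm measurableSet_Ioi).inter ((hζm measurableSet_Iic).inter (hVm hA))))
  have hPE : P {ω | ζhat ω ≤ s1 ∧ a < ζ ω ∧ ζ ω ≤ b ∧ V ω ∈ A}
      + P {ω | s1 < ζhat ω ∧ ζhat ω ≤ s2 ∧ a < ζ ω ∧ ζ ω ≤ b ∧ V ω ∈ A}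
      = P {ω | ζhat ω ≤ s2 ∧ a < ζ ω ∧ ζ ω ≤ b ∧ V ω ∈ A} := by
    rw [hset, measure_union hdisj hm2]
  rw [hX1, hX2] at hPE
  have hσ1 : 0 ≤ σ s1 := (hσ01 s1 h01).1
  have hre2 : (Real.exp (-(γ * a)) - Real.exp (-(γ * b))) * (σ s2 * Real.exp (γ * s2))
      = (Real.exp (-(γ * a)) - Real.exp (-(γ * b))) * (σ s1 * Real.exp (γ * s1))
        + (Real.exp (-(γ * a)) - Real.exp (-(γ * b))) *
            (σ s2 * Real.exp (γ * s2) - σ s1 * Real.exp (γ * s1)) := by ring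
  rw [hre2, ENNReal.ofReal_add
      (mul_nonneg (by linarith) (mul_nonneg hσ1 (Real.exp_pos _).le))
      (mul_nonneg (by linarith) (by linarith)),
    add_mul] at hPE
  exact (ENNReal.add_right_inj
    (ENNReal.mul_ne_top ENNReal.ofReal_ne_top (measure_ne_top μ A))).mp hPE

end


lemma lm_ex (t : ℝ) (ht : 0 < t) (x : ℝ) (hx : 0 < x) (hxt : x ≤ t) (N : ℕ) (hN : 0 < N) :
    ∃ k : ℕ, k < N ∧ (k:ℝ) * t / N < x ∧ x ≤ ((k:ℝ)+1) * t / N := by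
  have hNr : (0:ℝ) < N := Nat.cast_pos.mpr hN
  set y : ℝ := x * N / t with hy
  have hy0 : 0 < y := by positivity
  have hyN : y ≤ N := by
    rw [hy, div_le_iff₀ ht]
    nlinarith
  have hc1 : 1 ≤ ⌈y⌉₊ := Nat.one_le_ceil_iff.mpr hy0
  have hcN : ⌈y⌉₊ ≤ N := Nat.ceil_le.mpr hyN
  refine ⟨⌈y⌉₊ - 1, by omega, ?_, ?_⟩
  · have hcast : ((⌈y⌉₊ - 1 : ℕ) : ℝ) = (⌈y⌉₊ : ℝ) - 1 := by
      push_cast [Nat.cast_sub hc1]; ring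
    rw [hcast, div_lt_iff₀ hNr]
    have h1 : (⌈y⌉₊ : ℝ) < y + 1 := Nat.ceil_lt_add_one hy0.le
    have h2 : ((⌈y⌉₊ : ℝ) - 1) < y := by linarith
    -- (⌈y⌉-1) * t < x * N  since y = x*N/t
    have h3 : ((⌈y⌉₊ : ℝ) - 1) * t < y * t := by
      exact mul_lt_mul_of_pos_right h2 ht
    have h4 : y * t = x * N := by rw [hy]; field_simp
    linarith
  · have hcast : ((⌈y⌉₊ - 1 : ℕ) : ℝ) + 1 = (⌈y⌉₊ : ℝ) := by
      push_cast [Nat.cast_sub hc1]; ring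
    rw [hcast, le_div_iff₀ hNr]
    have h1 : y ≤ (⌈y⌉₊ : ℝ) := Nat.le_ceil y
    have h3 : y * t ≤ (⌈y⌉₊ : ℝ) * t := mul_le_mul_of_nonneg_right h1 ht.le
    have h4 : y * t = x * N := by rw [hy]; field_simp
    linarith

set_option maxHeartbeats 1600000 in
/-- If `ζ̂` and `σ : ℝ₊ → [0,1]` satisfy identity (3.2) and `G(t) = σ(t)e^{γt}` is
nondecreasing, then `ℙ(ζ̂ ∈ (0,t], 0 < ζ − ζ̂ ≤ u, V ∈ A) =
μ(A)(1 − e^{−γu})(σ(t) − σ(0) + γ∫₀ᵗ σ(x)dx)`. -/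
theorem stmt_7 {Ω : Type*} [MeasurableSpace Ω] (P : Measure Ω) [IsProbabilityMeasure P]
    {S : Type*} [MeasurableSpace S] (μ : Measure S) [IsProbabilityMeasure μ]
    (γ : ℝ) (hγ : 0 < γ)
    (ζ : Ω → ℝ) (V : Ω → S) (hζm : Measurable ζ) (hVm : Measurable V)
    (hζ0 : ∀ ω, 0 ≤ ζ ω)
    (ζhat : Ω → ℝ) (hζhatm : Measurable ζhat) (hζhat0 : ∀ ω, 0 ≤ ζhat ω)
    (σ : ℝ → ℝ) (hσ01 : ∀ t, 0 ≤ t → σ t ∈ Set.Icc (0 : ℝ) 1)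
    (h32 : ∀ t u, 0 ≤ t → 0 ≤ u → ∀ A : Set S, MeasurableSet A →
      P {ω | ζhat ω ≤ t ∧ ζ ω ≤ u ∧ V ω ∈ A} =
        P {ω | ζ ω ≤ min t u ∧ V ω ∈ A} +
          ENNReal.ofReal (σ t * (1 - Real.exp (-γ * max (u - t) 0))) * μ A)
    (hmono : ∀ s t, 0 ≤ s → s ≤ t → σ s * Real.exp (γ * s) ≤ σ t * Real.exp (γ * t)) :
    ∀ t u : ℝ, 0 ≤ t → 0 ≤ u → ∀ A : Set S, MeasurableSet A →
      P {ω | 0 < ζhat ω ∧ ζhat ω ≤ t ∧ ζhat ω < ζ ω ∧ ζ ω - ζhat ω ≤ u ∧ V ω ∈ A} =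
        μ A * ENNReal.ofReal
          ((1 - Real.exp (-γ * u)) * (σ t - σ 0 + γ * ∫ x in (0 : ℝ)..t, σ x)) := by
  intro t u ht0 hu0 A hA
  rcases eq_or_lt_of_le ht0 with ht | ht
  · -- t = 0
    subst ht
    have hempty : {ω | 0 < ζhat ω ∧ ζhat ω ≤ (0:ℝ) ∧ ζhat ω < ζ ω ∧ ζ ω - ζhat ω ≤ u ∧
        V ω ∈ A} = ∅ := by
      ext ω
      simp only [mem_setOf_eq, mem_empty_iff_false, iff_false, not_and]
      intro h1 h2
      exfalso; linarith
    rw [hempty, measure_empty, intervalIntegral.integral_same,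
      show σ 0 - σ 0 + γ * 0 = 0 by ring, mul_zero, ENNReal.ofReal_zero, mul_zero]
  rcases eq_or_lt_of_le hu0 with hu | hu
  · -- u = 0
    subst hu
    have hempty : {ω | 0 < ζhat ω ∧ ζhat ω ≤ t ∧ ζhat ω < ζ ω ∧ ζ ω - ζhat ω ≤ (0:ℝ) ∧
        V ω ∈ A} = ∅ := by
      ext ω
      simp only [mem_setOf_eq, mem_empty_iff_false, iff_false, not_and]
      intro h1 h2 h3 h4
      exfalso; linarith
    rw [hempty, measure_empty, show -γ * (0:ℝ) = 0 by ring, Real.exp_zero,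
      show (1:ℝ) - 1 = 0 by ring, zero_mul, ENNReal.ofReal_zero, mul_zero]
  -- main case : 0 < t, 0 < u
  set g : ℝ → ℝ := fun x => σ (max x 0) * Real.exp (γ * max x 0) with hgdef
  set f : ℝ → ℝ := fun x => σ (max x 0) with hfdef
  have hgs : ∀ s : ℝ, 0 ≤ s → g s = σ s * Real.exp (γ * s) := by
    intro s hs; simp only [hgdef, max_eq_left hs]
  have hfs0 : ∀ s : ℝ, 0 ≤ s → f s = σ s := by
    intro s hs; simp only [hfdef, max_eq_left hs]
  have hgmono : Monotone g := by
    intro x y hxy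
    simp only [hgdef]
    exact hmono (max x 0) (max y 0) (le_max_right x 0) (max_le_max hxy le_rfl)
  have hf01 : ∀ x, f x ∈ Icc (0:ℝ) 1 := fun x => hσ01 _ (le_max_right x 0)
  have hfs : ∀ s : ℝ, 0 ≤ s → f s = g s * Real.exp (-(γ * s)) := by
    intro s hs
    rw [hfs0 s hs, hgs s hs, mul_assoc, ← Real.exp_add, add_neg_cancel, Real.exp_zero, mul_one]
  have hg0 : ∀ x, 0 ≤ g x := fun x =>
    mul_nonneg (hσ01 _ (le_max_right x 0)).1 (Real.exp_pos _).le
  have hfeq : f = fun x => g x * Real.exp (-(γ * max x 0)) := by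
    funext x
    simp only [hfdef, hgdef]
    rw [mul_assoc, ← Real.exp_add, add_neg_cancel, Real.exp_zero, mul_one]
  have hfmeas : Measurable f := by
    rw [hfeq]
    exact hgmono.measurable.mul
      ((Real.continuous_exp.comp
        ((continuous_const.mul (continuous_id.max continuous_const)).neg)).measurable)
  have hlim0 := lm_lim γ t hγ ht g f hgmono hg0 hfs hfmeas hf01
  set Qs : ℕ → ℝ := fun n => ∑ k ∈ Finset.range (n+1),
      Real.exp (-(γ * (((k:ℝ)+1) * t / ((n:ℝ)+1)))) *
        (g (((k:ℝ)+1) * t / ((n:ℝ)+1)) - g ((k:ℝ) * t / ((n:ℝ)+1))) with hQs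
  set K : ℝ := f t - f 0 + γ * ∫ x in (0:ℝ)..t, f x with hK
  -- hlim0 : Tendsto Qs atTop (𝓝 K)
  set Tset : Set Ω := {ω | 0 < ζhat ω ∧ ζhat ω ≤ t ∧ ζhat ω < ζ ω ∧ ζ ω - ζhat ω ≤ u ∧
      V ω ∈ A} with hT
  set W : ℕ → Set Ω := fun n =>
      {ω | 0 < ζ ω - ζhat ω ∧ ζ ω - ζhat ω < t / ((n:ℝ)+1) ∧ ζ ω ≤ t} with hW
  -- lower bound
  have hlow : ∀ n : ℕ, t / ((n:ℝ)+1) ≤ u →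
      ENNReal.ofReal ((1 - Real.exp (-(γ * (u - t / ((n:ℝ)+1))))) * Qs n) * μ A
        ≤ P Tset := by
    intro n hδu
    have hNr : (0:ℝ) < (n:ℝ)+1 := by positivity
    set L : ℕ → Set Ω := fun k => {ω | (k:ℝ) * t / ((n:ℝ)+1) < ζhat ω ∧
        ζhat ω ≤ ((k:ℝ)+1) * t / ((n:ℝ)+1) ∧ ((k:ℝ)+1) * t / ((n:ℝ)+1) < ζ ω ∧
        ζ ω ≤ (k:ℝ) * t / ((n:ℝ)+1) + u ∧ V ω ∈ A} with hL
    have hLmeas : ∀ k, MeasurableSet (L k) := fun k =>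
      (hζhatm measurableSet_Ioi).inter ((hζhatm measurableSet_Iic).inter
        ((hζm measurableSet_Ioi).inter ((hζm measurableSet_Iic).inter (hVm hA))))
    have hLdisj : (↑(Finset.range (n+1)) : Set ℕ).PairwiseDisjoint L := by
      intro j _ k _ hjk
      rw [Function.onFun, Set.disjoint_left]
      intro ω hj hk
      simp only [hL, mem_setOf_eq] at hj hk
      rcases lt_or_gt_of_ne hjk with h | h
      · have hj1k : (j:ℝ) + 1 ≤ (k:ℝ) := by exact_mod_cast h
        have hle : ((j:ℝ)+1) * t / ((n:ℝ)+1) ≤ (k:ℝ) * t / ((n:ℝ)+1) := by gcongr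
        linarith [hj.2.1, hk.1]
      · have hj1k : (k:ℝ) + 1 ≤ (j:ℝ) := by exact_mod_cast h
        have hle : ((k:ℝ)+1) * t / ((n:ℝ)+1) ≤ (j:ℝ) * t / ((n:ℝ)+1) := by gcongr
        linarith [hk.2.1, hj.1]
    have hLsub : ∀ k ∈ Finset.range (n+1), L k ⊆ Tset := by
      intro k hk ω hω
      simp only [hL, mem_setOf_eq] at hω
      obtain ⟨h1, h2, h3, h4, h5⟩ := hω
      have hk0 : (0:ℝ) ≤ (k:ℝ) * t / ((n:ℝ)+1) := by positivity
      have hkn : (k:ℝ) + 1 ≤ (n:ℝ) + 1 := by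
        have : (k:ℕ) < n+1 := Finset.mem_range.mp hk
        have : (k:ℝ) ≤ (n:ℝ) := by exact_mod_cast Nat.lt_succ_iff.mp this
        linarith
      have hle : ((k:ℝ)+1) * t / ((n:ℝ)+1) ≤ ((n:ℝ)+1) * t / ((n:ℝ)+1) := by gcongr
      have heq : ((n:ℝ)+1) * t / ((n:ℝ)+1) = t := by field_simp
      exact ⟨by linarith, by linarith, by linarith, by linarith, h5⟩
    have hPL : ∀ k ∈ Finset.range (n+1), P (L k)
        = ENNReal.ofReal ((Real.exp (-(γ * (((k:ℝ)+1) * t / ((n:ℝ)+1)))) -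
            Real.exp (-(γ * ((k:ℝ) * t / ((n:ℝ)+1) + u)))) *
            (g (((k:ℝ)+1) * t / ((n:ℝ)+1)) - g ((k:ℝ) * t / ((n:ℝ)+1)))) * μ A := by
      intro k hk
      have h0 : (0:ℝ) ≤ (k:ℝ) * t / ((n:ℝ)+1) := by positivity
      have h12 : (k:ℝ) * t / ((n:ℝ)+1) ≤ ((k:ℝ)+1) * t / ((n:ℝ)+1) := by gcongr; linarith
      have hstep : ((k:ℝ)+1) * t / ((n:ℝ)+1) = (k:ℝ) * t / ((n:ℝ)+1) + t/((n:ℝ)+1) := by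
        ring
      have hab : ((k:ℝ)+1) * t / ((n:ℝ)+1) ≤ (k:ℝ) * t / ((n:ℝ)+1) + u := by
        rw [hstep]; linarith
      have hkey := keyA P μ γ ζ V ζhat σ hγ hζm hVm hζhatm hσ01 h32 A hA
        ((k:ℝ) * t / ((n:ℝ)+1)) (((k:ℝ)+1) * t / ((n:ℝ)+1)) (((k:ℝ)+1) * t / ((n:ℝ)+1))
        ((k:ℝ) * t / ((n:ℝ)+1) + u) h0 h12 le_rfl hab (hmono _ _ h0 h12)
      simp only [hL]
      rw [hgs _ h0, hgs _ (h0.trans h12)]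
      exact hkey
    have hnn : ∀ k ∈ Finset.range (n+1),
        0 ≤ (Real.exp (-(γ * (((k:ℝ)+1) * t / ((n:ℝ)+1)))) -
            Real.exp (-(γ * ((k:ℝ) * t / ((n:ℝ)+1) + u)))) *
            (g (((k:ℝ)+1) * t / ((n:ℝ)+1)) - g ((k:ℝ) * t / ((n:ℝ)+1))) := by
      intro k hk
      have h12 : (k:ℝ) * t / ((n:ℝ)+1) ≤ ((k:ℝ)+1) * t / ((n:ℝ)+1) := by gcongr; linarith
      have hstep : ((k:ℝ)+1) * t / ((n:ℝ)+1) = (k:ℝ) * t / ((n:ℝ)+1) + t/((n:ℝ)+1) := by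
        ring
      have hexp : Real.exp (-(γ * ((k:ℝ) * t / ((n:ℝ)+1) + u)))
          ≤ Real.exp (-(γ * (((k:ℝ)+1) * t / ((n:ℝ)+1)))) := by
        apply Real.exp_le_exp.mpr
        rw [hstep]
        nlinarith
      exact mul_nonneg (by linarith) (by linarith [hgmono h12])
    have hsum : ∑ k ∈ Finset.range (n+1), P (L k)
        = ENNReal.ofReal ((1 - Real.exp (-(γ * (u - t / ((n:ℝ)+1))))) * Qs n) * μ A := by
      rw [Finset.sum_congr rfl hPL, ← Finset.sum_mul, ← ENNReal.ofReal_sum_of_nonneg hnn]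
      congr 2
      rw [hQs, Finset.mul_sum]
      refine Finset.sum_congr rfl fun k hk => ?_
      have he : Real.exp (-(γ * ((k:ℝ) * t / ((n:ℝ)+1) + u)))
          = Real.exp (-(γ * (((k:ℝ)+1) * t / ((n:ℝ)+1)))) *
              Real.exp (-(γ * (u - t/((n:ℝ)+1)))) := by
        rw [← Real.exp_add]; congr 1; ring
      rw [he]; ring
    calc ENNReal.ofReal ((1 - Real.exp (-(γ * (u - t / ((n:ℝ)+1))))) * Qs n) * μ A
        = ∑ k ∈ Finset.range (n+1), P (L k) := hsum.symm
      _ = P (⋃ k ∈ Finset.range (n+1), L k) :=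
          (measure_biUnion_finset hLdisj (fun k _ => hLmeas k)).symm
      _ ≤ P Tset := measure_mono (iUnion₂_subset hLsub)
  -- upper bound
  have hup : ∀ n : ℕ,
      P Tset ≤ ENNReal.ofReal ((1 - Real.exp (-(γ * u))) * Qs n) * μ A + P (W n) := by
    intro n
    have hNr : (0:ℝ) < (n:ℝ)+1 := by positivity
    set U : ℕ → Set Ω := fun k => {ω | (k:ℝ) * t / ((n:ℝ)+1) < ζhat ω ∧
        ζhat ω ≤ ((k:ℝ)+1) * t / ((n:ℝ)+1) ∧ ((k:ℝ)+1) * t / ((n:ℝ)+1) < ζ ω ∧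
        ζ ω ≤ ((k:ℝ)+1) * t / ((n:ℝ)+1) + u ∧ V ω ∈ A} with hU
    have hsub : Tset ⊆ (⋃ k ∈ Finset.range (n+1), U k) ∪ W n := by
      intro ω hω
      simp only [hT, mem_setOf_eq] at hω
      obtain ⟨h1, h2, h3, h4, h5⟩ := hω
      obtain ⟨k, hkn, hk1, hk2⟩ := lm_ex t ht (ζhat ω) h1 h2 (n+1) (Nat.succ_pos n)
      rw [show ((n+1:ℕ):ℝ) = (n:ℝ)+1 by push_cast; ring] at hk1 hk2
      have hkr : (k:ℝ) + 1 ≤ (n:ℝ) + 1 := by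
        have : (k:ℝ) ≤ (n:ℝ) := by exact_mod_cast Nat.lt_succ_iff.mp hkn
        linarith
      have hle : ((k:ℝ)+1) * t / ((n:ℝ)+1) ≤ ((n:ℝ)+1) * t / ((n:ℝ)+1) := by gcongr
      have heq : ((n:ℝ)+1) * t / ((n:ℝ)+1) = t := by field_simp
      rcases le_or_gt (ζ ω) (((k:ℝ)+1) * t / ((n:ℝ)+1)) with hle2 | hgt
      · right
        simp only [hW, mem_setOf_eq]
        have hstep : ((k:ℝ)+1) * t / ((n:ℝ)+1) = (k:ℝ) * t / ((n:ℝ)+1) + t/((n:ℝ)+1) := by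
          ring
        exact ⟨by linarith, by linarith, by linarith⟩
      · left
        refine mem_iUnion₂.mpr ⟨k, Finset.mem_range.mpr hkn, ?_⟩
        simp only [hU, mem_setOf_eq]
        exact ⟨hk1, hk2, hgt, by linarith, h5⟩
    have hPU : ∀ k ∈ Finset.range (n+1), P (U k)
        = ENNReal.ofReal ((Real.exp (-(γ * (((k:ℝ)+1) * t / ((n:ℝ)+1)))) -
            Real.exp (-(γ * (((k:ℝ)+1) * t / ((n:ℝ)+1) + u)))) *
            (g (((k:ℝ)+1) * t / ((n:ℝ)+1)) - g ((k:ℝ) * t / ((n:ℝ)+1)))) * μ A := by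
      intro k hk
      have h0 : (0:ℝ) ≤ (k:ℝ) * t / ((n:ℝ)+1) := by positivity
      have h12 : (k:ℝ) * t / ((n:ℝ)+1) ≤ ((k:ℝ)+1) * t / ((n:ℝ)+1) := by gcongr; linarith
      have hab : ((k:ℝ)+1) * t / ((n:ℝ)+1) ≤ ((k:ℝ)+1) * t / ((n:ℝ)+1) + u := by linarith
      have hkey := keyA P μ γ ζ V ζhat σ hγ hζm hVm hζhatm hσ01 h32 A hA
        ((k:ℝ) * t / ((n:ℝ)+1)) (((k:ℝ)+1) * t / ((n:ℝ)+1)) (((k:ℝ)+1) * t / ((n:ℝ)+1))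
        (((k:ℝ)+1) * t / ((n:ℝ)+1) + u) h0 h12 le_rfl hab (hmono _ _ h0 h12)
      simp only [hU]
      rw [hgs _ h0, hgs _ (h0.trans h12)]
      exact hkey
    have hnnU : ∀ k ∈ Finset.range (n+1),
        0 ≤ (Real.exp (-(γ * (((k:ℝ)+1) * t / ((n:ℝ)+1)))) -
            Real.exp (-(γ * (((k:ℝ)+1) * t / ((n:ℝ)+1) + u)))) *
            (g (((k:ℝ)+1) * t / ((n:ℝ)+1)) - g ((k:ℝ) * t / ((n:ℝ)+1))) := by
      intro k hk
      have h12 : (k:ℝ) * t / ((n:ℝ)+1) ≤ ((k:ℝ)+1) * t / ((n:ℝ)+1) := by gcongr; linarith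
      have hexp : Real.exp (-(γ * (((k:ℝ)+1) * t / ((n:ℝ)+1) + u)))
          ≤ Real.exp (-(γ * (((k:ℝ)+1) * t / ((n:ℝ)+1)))) := by
        apply Real.exp_le_exp.mpr
        nlinarith
      exact mul_nonneg (by linarith) (by linarith [hgmono h12])
    have hsumU : ∑ k ∈ Finset.range (n+1), P (U k)
        = ENNReal.ofReal ((1 - Real.exp (-(γ * u))) * Qs n) * μ A := by
      rw [Finset.sum_congr rfl hPU, ← Finset.sum_mul, ← ENNReal.ofReal_sum_of_nonneg hnnU]
      congr 2
      rw [hQs, Finset.mul_sum]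
      refine Finset.sum_congr rfl fun k hk => ?_
      have he : Real.exp (-(γ * (((k:ℝ)+1) * t / ((n:ℝ)+1) + u)))
          = Real.exp (-(γ * (((k:ℝ)+1) * t / ((n:ℝ)+1)))) * Real.exp (-(γ * u)) := by
        rw [← Real.exp_add]; congr 1; ring
      rw [he]; ring
    calc P Tset ≤ P ((⋃ k ∈ Finset.range (n+1), U k) ∪ W n) := measure_mono hsub
      _ ≤ P (⋃ k ∈ Finset.range (n+1), U k) + P (W n) := measure_union_le _ _
      _ ≤ (∑ k ∈ Finset.range (n+1), P (U k)) + P (W n) :=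
          add_le_add_left (measure_biUnion_finset_le _ _) _
      _ = ENNReal.ofReal ((1 - Real.exp (-(γ * u))) * Qs n) * μ A + P (W n) := by
          rw [hsumU]
  -- W tends to 0
  have hWmeas : ∀ n, MeasurableSet (W n) := fun n =>
    ((hζm.sub hζhatm) measurableSet_Ioi).inter
      (((hζm.sub hζhatm) measurableSet_Iio).inter (hζm measurableSet_Iic))
  have hWanti : Antitone W := by
    intro m n hmn ω hω
    simp only [hW, mem_setOf_eq] at hω ⊢
    have hmn' : (m:ℝ) + 1 ≤ (n:ℝ) + 1 := by
      have : (m:ℝ) ≤ (n:ℝ) := by exact_mod_cast hmn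
      linarith
    have : t / ((n:ℝ)+1) ≤ t / ((m:ℝ)+1) := by
      apply div_le_div_of_nonneg_left ht.le (by positivity) hmn'
    exact ⟨hω.1, lt_of_lt_of_le hω.2.1 this, hω.2.2⟩
  have hWempty : ⋂ n, W n = ∅ := by
    ext ω
    simp only [mem_iInter, mem_empty_iff_false, iff_false, not_forall]
    by_contra hcon
    push_neg at hcon
    have h0 := hcon 0
    simp only [hW, mem_setOf_eq] at h0
    obtain ⟨hd, _, _⟩ := h0
    obtain ⟨n, hn⟩ := exists_nat_gt (t / (ζ ω - ζhat ω))
    have hn2 := hcon n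
    simp only [hW, mem_setOf_eq] at hn2
    have h1 : t / (ζ ω - ζhat ω) < (n:ℝ) := hn
    have h2 : t < (ζ ω - ζhat ω) * ((n:ℝ)+1) := by
      have := (div_lt_iff₀ hd).mp h1
      nlinarith
    have h3 : t / ((n:ℝ)+1) < ζ ω - ζhat ω := by
      rw [div_lt_iff₀ (by positivity)]
      linarith
    linarith [hn2.2.1]
  have hW0 : Tendsto (fun n => P (W n)) atTop (𝓝 0) := by
    have h := tendsto_measure_iInter_atTop (μ := P) (s := W)
      (fun n => (hWmeas n).nullMeasurableSet) hWanti ⟨0, measure_ne_top P _⟩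
    rw [hWempty, measure_empty] at h
    exact h
  -- limits
  have hδto : Tendsto (fun n : ℕ => t / ((n:ℝ)+1)) atTop (𝓝 0) := by
    have h := tendsto_one_div_add_atTop_nhds_zero_nat.const_mul t
    rw [mul_zero] at h
    refine h.congr fun n => ?_
    rw [mul_one_div]
  have hcont : Continuous fun y : ℝ => 1 - Real.exp (-(γ * y)) :=
    continuous_const.sub (Real.continuous_exp.comp ((continuous_const.mul continuous_id).neg))
  have husub : Tendsto (fun n : ℕ => u - t / ((n:ℝ)+1)) atTop (𝓝 u) := by
    have h := Tendsto.sub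
      (tendsto_const_nhds : Tendsto (fun _ : ℕ => u) atTop (𝓝 u)) hδto
    rw [sub_zero] at h
    exact h
  have hreal1 : Tendsto (fun n : ℕ => (1 - Real.exp (-(γ * (u - t / ((n:ℝ)+1))))) * Qs n)
      atTop (𝓝 ((1 - Real.exp (-(γ * u))) * K)) :=
    ((hcont.tendsto u).comp husub).mul hlim0
  have hreal2 : Tendsto (fun n : ℕ => (1 - Real.exp (-(γ * u))) * Qs n)
      atTop (𝓝 ((1 - Real.exp (-(γ * u))) * K)) :=
    tendsto_const_nhds.mul hlim0
  have hEK1 : Tendsto (fun n : ℕ =>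
      ENNReal.ofReal ((1 - Real.exp (-(γ * (u - t / ((n:ℝ)+1))))) * Qs n) * μ A)
      atTop (𝓝 (ENNReal.ofReal ((1 - Real.exp (-(γ * u))) * K) * μ A)) :=
    ENNReal.Tendsto.mul_const ((ENNReal.continuous_ofReal.tendsto _).comp hreal1)
      (Or.inr (measure_ne_top μ A))
  have hEK2 : Tendsto (fun n : ℕ =>
      ENNReal.ofReal ((1 - Real.exp (-(γ * u))) * Qs n) * μ A + P (W n))
      atTop (𝓝 (ENNReal.ofReal ((1 - Real.exp (-(γ * u))) * K) * μ A + 0)) :=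
    Tendsto.add (ENNReal.Tendsto.mul_const
      ((ENNReal.continuous_ofReal.tendsto _).comp hreal2) (Or.inr (measure_ne_top μ A))) hW0
  rw [add_zero] at hEK2
  have hle1 : P Tset ≤ ENNReal.ofReal ((1 - Real.exp (-(γ * u))) * K) * μ A :=
    ge_of_tendsto hEK2 (Eventually.of_forall hup)
  have hle2 : ENNReal.ofReal ((1 - Real.exp (-(γ * u))) * K) * μ A ≤ P Tset := by
    apply le_of_tendsto hEK1
    have hev : ∀ᶠ n : ℕ in atTop, t / ((n:ℝ)+1) < u := hδto.eventually_lt_const hu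
    exact hev.mono fun n hn => hlow n hn.le
  have hfinal := le_antisymm hle1 hle2
  rw [hfinal]
  have hft : f t = σ t := hfs0 t ht.le
  have hf0 : f 0 = σ 0 := hfs0 0 le_rfl
  have hint : ∫ x in (0:ℝ)..t, f x = ∫ x in (0:ℝ)..t, σ x := by
    apply intervalIntegral.integral_congr
    intro x hx
    rw [Set.uIcc_of_le ht0] at hx
    exact (hfs0 x hx.1).symm ▸ rfl
  rw [hK, hft, hf0, hint, mul_comm]
  congr 2
  rw [neg_mul]
end

section
/- Let S = {1,…,N} be a finite set with the discrete σ-algebra, μ a probability measure on S, and let f : ℝ₊ × S → ℝ₊ be a Radon–Nikodym derivative with respect to ν_γ × μ of the absolutely continuous part, in the Lebesgue decomposition, of the law of (ζ,V) with respect to ν_γ × μ. Then for every t ∈ ℝ₊, inf{ ℙ((ζ−t,V) ∈ C)/(ν_γ×μ)(C) : C ∈ 𝔅_{ℝ₊}⊗𝒮, (ν_γ×μ)(C) > 0 } = e^{−γt} · essinf_{(x,s) ∈ (t,∞)×S} f(x,s), where the essential infimum is taken with respect to ν_γ × μ. -/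
open MeasureTheory ProbabilityTheory Real Set
open scoped ENNReal

lemma expν_eq_expMeasure (γ : ℝ) : expν γ = ProbabilityTheory.expMeasure γ := by
  rw [expν, expMeasure, gammaMeasure]
  congr 1
  funext x
  show _ = exponentialPDF γ x
  rw [exponentialPDF_eq]
  split_ifs with h
  · rw [neg_mul]
  · simp

instance expν_prob_s9 (γ : ℝ) [Fact (0 < γ)] : IsProbabilityMeasure (expν γ) := by
  rw [expν_eq_expMeasure]; exact isProbabilityMeasure_expMeasure (Fact.out)

lemma expν_Iic_zero (γ : ℝ) : expν γ (Iic 0) = 0 := by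
  have hmeas : Measurable (fun x : ℝ => if 0 ≤ x then ENNReal.ofReal (γ * Real.exp (-γ * x)) else 0) := by
    apply Measurable.ite (measurableSet_le measurable_const measurable_id) (by fun_prop) measurable_const
  have h1 : expν γ (Iio 0) = 0 := by
    rw [expν, withDensity_apply _ measurableSet_Iio]
    rw [setLIntegral_congr_fun measurableSet_Iio
      (fun x hx => if_neg (not_le.2 hx))]
    simp
  have h2 : expν γ {(0:ℝ)} = 0 := by
    rw [expν, withDensity_apply _ (measurableSet_singleton 0)]
    rw [setLIntegral_measure_zero _ _ (by simp)]
  have : expν γ (Iic 0) ≤ expν γ (Iio 0) + expν γ {(0:ℝ)} := by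
    refine (measure_mono ?_).trans (measure_union_le _ _)
    intro x hx
    rcases lt_or_eq_of_le (mem_Iic.mp hx) with h | h
    · exact Or.inl h
    · exact Or.inr (by simp [h])
  simpa [h1, h2] using nonpos_iff_eq_zero.mp (by simpa [h1, h2] using this)

lemma key1 (γ t : ℝ) (ht : 0 ≤ t) (G : ℝ → ℝ≥0∞) (hG : Measurable G) :
    ∫⁻ x in Ioi t, G x ∂(expν γ) =
      ENNReal.ofReal (Real.exp (-γ * t)) * ∫⁻ x in Ioi 0, G (x + t) ∂(expν γ) := by
  set h : ℝ → ℝ≥0∞ := fun x => if 0 ≤ x then ENNReal.ofReal (γ * Real.exp (-γ * x)) else 0 with hh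
  have hmeas : Measurable h := by
    apply Measurable.ite (measurableSet_le measurable_const measurable_id) (by fun_prop) measurable_const
  have hGt : Measurable (fun x : ℝ => G (x + t)) := hG.comp (measurable_add_const t)
  rw [expν, setLIntegral_withDensity_eq_setLIntegral_mul _ hmeas hG measurableSet_Ioi,
    setLIntegral_withDensity_eq_setLIntegral_mul _ hmeas hGt measurableSet_Ioi]
  have hvol : volume.restrict (Ioi t) = (volume.restrict (Ioi (0:ℝ))).map (· + t) := by
    conv_lhs => rw [← map_add_right_eq_self volume t]
    rw [Measure.restrict_map (measurable_add_const t) measurableSet_Ioi]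
    congr 1
    ext x
    simp
  simp only [Pi.mul_apply]
  calc ∫⁻ x in Ioi t, h x * G x ∂volume
      = ∫⁻ x, h x * G x ∂((volume.restrict (Ioi (0:ℝ))).map (· + t)) := by rw [← hvol]
    _ = ∫⁻ x in Ioi 0, h (x + t) * G (x + t) ∂volume := by
        rw [lintegral_map (f := fun x => h x * G x) (hmeas.mul hG) (measurable_add_const t)]
    _ = ∫⁻ x in Ioi 0, ENNReal.ofReal (Real.exp (-γ * t)) * (h x * G (x + t)) ∂volume := by
        apply setLIntegral_congr_fun measurableSet_Ioi
        intro x hx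
        have hx0 : (0:ℝ) ≤ x := le_of_lt hx
        have hxt : (0:ℝ) ≤ x + t := by linarith
        simp only [hh, if_pos hxt, if_pos hx0]
        rw [← mul_assoc, ← ENNReal.ofReal_mul (exp_nonneg _)]
        congr 2
        rw [show -γ * (x + t) = -γ * t + -γ * x by ring, Real.exp_add]
        ring
    _ = ENNReal.ofReal (Real.exp (-γ * t)) * ∫⁻ x in Ioi 0, h x * G (x + t) ∂volume := by
        rw [lintegral_const_mul (f := fun x => h x * G (x + t)) _ (hmeas.mul hGt)]

lemma key2 {S : Type*} [MeasurableSpace S] (μ : Measure S) [IsProbabilityMeasure μ]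
    (γ t : ℝ) (hγ : 0 < γ) (ht : 0 ≤ t) (g : ℝ × S → ℝ≥0∞) (hg : Measurable g) :
    ∫⁻ p in Ioi t ×ˢ (univ : Set S), g p ∂((expν γ).prod μ) =
      ENNReal.ofReal (Real.exp (-γ * t)) *
        ∫⁻ p in Ioi 0 ×ˢ (univ : Set S), g (p.1 + t, p.2) ∂((expν γ).prod μ) := by
  haveI : Fact (0 < γ) := ⟨hγ⟩
  have hσ : Measurable (fun p : ℝ × S => (p.1 + t, p.2)) :=
    (measurable_fst.add measurable_const).prodMk measurable_snd
  have hgσ : Measurable (fun p : ℝ × S => g (p.1 + t, p.2)) := hg.comp hσ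
  rw [← Measure.prod_restrict, ← Measure.prod_restrict, Measure.restrict_univ]
  rw [lintegral_prod _ hg.aemeasurable, lintegral_prod _ hgσ.aemeasurable]
  exact key1 γ t ht (fun x => ∫⁻ s, g (x, s) ∂μ) hg.lintegral_prod_right'

/-- Theorem 3.3: for a finite mark space `S` and `f` the density of the absolutely continuous
part of the law of `(ζ, V)` with respect to `ν_γ × μ`,
`inf_C ℙ((ζ−t,V) ∈ C)/(ν_γ×μ)(C) = e^{−γt}·essinf_{(t,∞)×S} f` for every `t ∈ ℝ₊`. -/
theorem stmt_9 {Ω : Type*} [MeasurableSpace Ω] (P : Measure Ω) [IsProbabilityMeasure P]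
    {S : Type*} [Fintype S] [Nonempty S] [MeasurableSpace S] [MeasurableSingletonClass S]
    (μ : Measure S) [IsProbabilityMeasure μ]
    (γ : ℝ) (hγ : 0 < γ)
    (ζ : Ω → ℝ) (V : Ω → S) (hζm : Measurable ζ) (hVm : Measurable V)
    (hζ0 : ∀ ω, 0 ≤ ζ ω)
    (f : ℝ × S → ℝ) (hfm : Measurable f) (hf0 : ∀ p, 0 ≤ f p)
    (ρs : Measure (ℝ × S))
    (hdecomp : Measure.map (fun ω => (ζ ω, V ω)) P =
      ((expν γ).prod μ).withDensity (fun p => ENNReal.ofReal (f p)) + ρs)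
    (hsing : ρs ⟂ₘ (expν γ).prod μ) :
    ∀ t, 0 ≤ t →
      (⨅ (C : Set (ℝ × S)) (_ : MeasurableSet C ∧ 0 < ((expν γ).prod μ) C),
          P ((fun ω => (ζ ω - t, V ω)) ⁻¹' C) / ((expν γ).prod μ) C) =
        ENNReal.ofReal (Real.exp (-γ * t)) *
          essInf (fun p => ENNReal.ofReal (f p))
            (((expν γ).prod μ).restrict (Set.Ioi t ×ˢ (Set.univ : Set S))) := by
  intro t ht
  haveI : Fact (0 < γ) := ⟨hγ⟩
  set ν : Measure ℝ := expν γ with hν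
  set m : Measure (ℝ × S) := ν.prod μ with hm
  haveI : IsProbabilityMeasure m := by infer_instance
  set c : ℝ≥0∞ := ENNReal.ofReal (Real.exp (-γ * t)) with hc
  set F : ℝ × S → ℝ≥0∞ := fun p => ENNReal.ofReal (f p) with hF
  have hFm : Measurable F := ENNReal.measurable_ofReal.comp hfm
  set W : Set (ℝ × S) := Ioi t ×ˢ (univ : Set S) with hWdef
  set U : Set (ℝ × S) := Ioi (0:ℝ) ×ˢ (univ : Set S) with hUdef
  have hWm : MeasurableSet W := measurableSet_Ioi.prod MeasurableSet.univ
  have hUm : MeasurableSet U := measurableSet_Ioi.prod MeasurableSet.univ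
  set J : ℝ≥0∞ := essInf F (m.restrict W) with hJdef
  set σf : ℝ × S → ℝ × S := fun p => (p.1 + t, p.2) with hσf
  set T : ℝ × S → ℝ × S := fun p => (p.1 - t, p.2) with hT
  have hσm : Measurable σf := (measurable_fst.add measurable_const).prodMk measurable_snd
  have hTm : Measurable T := (measurable_fst.sub measurable_const).prodMk measurable_snd
  have hc0 : c ≠ 0 := (ENNReal.ofReal_pos.2 (exp_pos _)).ne'
  have hctop : c ≠ ∞ := ENNReal.ofReal_ne_top
  have hc1 : c ≤ 1 := by
    rw [hc]
    calc ENNReal.ofReal (Real.exp (-γ * t)) ≤ ENNReal.ofReal 1 := by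
          apply ENNReal.ofReal_le_ofReal
          rw [← Real.exp_zero]
          apply Real.exp_le_exp.mpr
          nlinarith
      _ = 1 := ENNReal.ofReal_one
  have hmUc : m Uᶜ = 0 := by
    have hsub : Uᶜ ⊆ Iic (0:ℝ) ×ˢ (univ : Set S) := by
      intro p hp
      simp only [hUdef, mem_compl_iff, mem_prod, mem_Ioi, mem_univ, and_true, not_lt] at hp
      exact ⟨hp, mem_univ _⟩
    refine nonpos_iff_eq_zero.mp ?_
    calc m Uᶜ ≤ m (Iic (0:ℝ) ×ˢ (univ : Set S)) := measure_mono hsub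
      _ = ν (Iic 0) * μ univ := Measure.prod_prod _ _
      _ = 0 := by rw [hν, expν_Iic_zero, zero_mul]
  -- generic shift-measure identity
  have keymeas : ∀ A : Set (ℝ × S), MeasurableSet A → A ⊆ W → m A = c * m (σf ⁻¹' A) := by
    intro A hAm hAW
    have hpreU : σf ⁻¹' A ⊆ U := by
      intro p hp
      have := (hAW hp).1
      simp only [mem_Ioi] at this
      exact ⟨by simp only [mem_Ioi]; linarith, mem_univ _⟩
    have h2 := key2 μ γ t hγ ht (A.indicator 1) (measurable_one.indicator hAm)
    have hL : ∫⁻ p in W, A.indicator (1 : ℝ × S → ℝ≥0∞) p ∂m = m A := by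
      rw [lintegral_indicator_one hAm, Measure.restrict_apply hAm,
        inter_eq_self_of_subset_left hAW]
    have hR : ∫⁻ p in U, A.indicator (1 : ℝ × S → ℝ≥0∞) (p.1 + t, p.2) ∂m
        = m (σf ⁻¹' A) := by
      have hcong : ∀ p : ℝ × S, A.indicator (1 : ℝ × S → ℝ≥0∞) (p.1 + t, p.2)
          = (σf ⁻¹' A).indicator (1 : ℝ × S → ℝ≥0∞) p := by
        intro p
        by_cases h : (p.1 + t, p.2) ∈ A
        · rw [Set.indicator_of_mem h, Set.indicator_of_mem (by exact h)]
          rfl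
        · rw [Set.indicator_of_notMem h, Set.indicator_of_notMem (by exact h)]
      rw [lintegral_congr hcong, lintegral_indicator_one (hσm hAm),
        Measure.restrict_apply (hσm hAm), inter_eq_self_of_subset_left hpreU]
    rw [hL, hR] at h2
    exact h2
  have hmW : m W = c := by
    have h2 : m W = c * m U := by
      have := keymeas W hWm subset_rfl
      have hpre : σf ⁻¹' W = U := by
        ext p
        simp only [hσf, hWdef, hUdef, mem_preimage, mem_prod, mem_Ioi, mem_univ, and_true]
        constructor <;> intro h <;> linarith
      rwa [hpre] at this
    have hU1 : m U = 1 := by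
      have h3 := measure_add_measure_compl (μ := m) hUm
      rw [hmUc, add_zero, measure_univ] at h3
      exact h3
    rw [h2, hU1, mul_one]
  have hmWne : m.restrict W ≠ 0 := by
    intro h0
    have : (m.restrict W) univ = c := by rw [Measure.restrict_apply_univ]; exact hmW
    rw [h0] at this
    exact hc0 (by simpa using this.symm)
  have hJtop : J ≠ ∞ := by
    intro hJt
    have h1 : ∀ᵐ p ∂(m.restrict W), J ≤ F p := ae_essInf_le
    rw [hJt] at h1
    have h2 : ∀ᵐ _p ∂(m.restrict W), False := by
      filter_upwards [h1] with p hp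
      exact ENNReal.ofReal_ne_top (top_le_iff.mp hp)
    exact hmWne (ae_eq_bot.mp (Filter.eventually_false_iff_eq_bot.mp h2))
  -- numerator formula
  have hN : ∀ C : Set (ℝ × S), MeasurableSet C →
      P ((fun ω => (ζ ω - t, V ω)) ⁻¹' C) = ∫⁻ p in T ⁻¹' C, F p ∂m + ρs (T ⁻¹' C) := by
    intro C hC
    have h1 : (fun ω => (ζ ω - t, V ω)) ⁻¹' C = (fun ω => (ζ ω, V ω)) ⁻¹' (T ⁻¹' C) := rfl
    rw [h1, ← Measure.map_apply (hζm.prodMk hVm) (hTm hC), hdecomp, Measure.add_apply,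
      withDensity_apply _ (hTm hC)]
  -- lower bound
  have hlow : ∀ C : Set (ℝ × S), MeasurableSet C → 0 < m C →
      c * J ≤ P ((fun ω => (ζ ω - t, V ω)) ⁻¹' C) / m C := by
    intro C hC hCpos
    have hCUm : MeasurableSet (C ∩ U) := hC.inter hUm
    have hCC' : m (C ∩ U) = m C := by
      refine le_antisymm (measure_mono inter_subset_left) ?_
      calc m C ≤ m (C ∩ U ∪ Uᶜ) := measure_mono (fun p hp => by
            by_cases h : p ∈ U
            · exact Or.inl ⟨hp, h⟩
            · exact Or.inr h)
        _ ≤ m (C ∩ U) + m Uᶜ := measure_union_le _ _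
        _ = m (C ∩ U) := by rw [hmUc, add_zero]
    set D : Set (ℝ × S) := T ⁻¹' (C ∩ U) with hD
    have hDm : MeasurableSet D := hTm hCUm
    have hDW : D ⊆ W := by
      intro p hp
      have h2 : (p.1 - t, p.2) ∈ C ∩ U := hp
      have h3 := h2.2.1
      simp only [mem_Ioi] at h3
      exact ⟨by simp only [mem_Ioi]; linarith, mem_univ _⟩
    have hσD : σf ⁻¹' D = C ∩ U := by
      ext p
      simp only [hD, hσf, hT, mem_preimage, add_sub_cancel_right]
    have hmD : m D = c * m C := by
      have := keymeas D hDm hDW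
      rw [hσD, hCC'] at this
      exact this
    have hae : ∀ᵐ p ∂((m.restrict W).restrict D), J ≤ F p :=
      ae_restrict_of_ae ae_essInf_le
    have hFD : J * m D ≤ ∫⁻ p in D, F p ∂m := by
      have e1 : ∫⁻ p in D, F p ∂m = ∫⁻ p in D, F p ∂(m.restrict W) := by
        rw [Measure.restrict_restrict hDm, inter_eq_self_of_subset_left hDW]
      rw [e1]
      calc J * m D = ∫⁻ _ in D, J ∂(m.restrict W) := by
            rw [setLIntegral_const, Measure.restrict_apply hDm,
              inter_eq_self_of_subset_left hDW]
        _ ≤ ∫⁻ p in D, F p ∂(m.restrict W) := lintegral_mono_ae hae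
    have hnum : c * J * m C ≤ P ((fun ω => (ζ ω - t, V ω)) ⁻¹' C) := by
      rw [hN C hC]
      calc c * J * m C = J * (c * m C) := by ring
        _ = J * m D := by rw [hmD]
        _ ≤ ∫⁻ p in D, F p ∂m := hFD
        _ ≤ ∫⁻ p in T ⁻¹' C, F p ∂m := lintegral_mono_set (preimage_mono inter_subset_left)
        _ ≤ _ := le_self_add
    rw [ENNReal.le_div_iff_mul_le (Or.inl hCpos.ne') (Or.inl (measure_ne_top m C))]
    exact hnum
  -- upper bound
  have hupper : ∀ a : ℝ≥0∞, J < a → a ≠ ∞ →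
      (⨅ (C : Set (ℝ × S)) (_ : MeasurableSet C ∧ 0 < m C),
        P ((fun ω => (ζ ω - t, V ω)) ⁻¹' C) / m C) ≤ c * a := by
    intro a hJa hatop
    obtain ⟨E, hEm, hEρ, hEc⟩ := hsing
    set A : Set (ℝ × S) := (W ∩ {p | F p < a}) ∩ E with hA
    have hFa_meas : MeasurableSet {p : ℝ × S | F p < a} :=
      measurableSet_lt hFm measurable_const
    have hAm : MeasurableSet A := (hWm.inter hFa_meas).inter hEm
    have hAW : A ⊆ W := fun p hp => hp.1.1
    have hmA : 0 < m A := by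
      by_contra h0
      rw [not_lt, nonpos_iff_eq_zero] at h0
      have h1 : m (W ∩ {p | F p < a}) = 0 := by
        refine nonpos_iff_eq_zero.mp ?_
        calc m (W ∩ {p | F p < a}) ≤ m (A ∪ Eᶜ) := measure_mono (fun p hp => by
              by_cases h : p ∈ E
              · exact Or.inl ⟨hp, h⟩
              · exact Or.inr h)
          _ ≤ m A + m Eᶜ := measure_union_le _ _
          _ = 0 := by rw [h0, hEc, add_zero]
      have h2 : ∀ᵐ p ∂(m.restrict W), a ≤ F p := by
        rw [ae_iff]
        have hset : {p : ℝ × S | ¬ a ≤ F p} = {p | F p < a} := by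
          ext p; simp [not_le]
        rw [hset, Measure.restrict_apply hFa_meas, inter_comm]
        exact h1
      exact absurd (le_essInf_of_ae_le a h2) (not_le.2 hJa)
    set Cu : Set (ℝ × S) := σf ⁻¹' A with hCu
    have hCum : MeasurableSet Cu := hσm hAm
    have hmCu : m A = c * m Cu := keymeas A hAm hAW
    have hCupos : 0 < m Cu := by
      by_contra h0
      rw [not_lt, nonpos_iff_eq_zero] at h0
      rw [h0, mul_zero] at hmCu
      exact hmA.ne' hmCu
    have hpre : T ⁻¹' Cu = A := by
      ext p
      simp only [hCu, hσf, hT, mem_preimage, sub_add_cancel]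
    have hPnum : P ((fun ω => (ζ ω - t, V ω)) ⁻¹' Cu) ≤ a * (c * m Cu) := by
      rw [hN Cu hCum, hpre]
      have hρA : ρs A = 0 :=
        nonpos_iff_eq_zero.mp (le_trans (measure_mono (fun p hp => hp.2)) hEρ.le)
      rw [hρA, add_zero, ← hmCu]
      calc ∫⁻ p in A, F p ∂m ≤ ∫⁻ _ in A, a ∂m :=
            setLIntegral_mono measurable_const (fun p hp => (hp.1.2).le)
        _ = a * m A := setLIntegral_const _ _
    refine iInf_le_of_le Cu (iInf_le_of_le ⟨hCum, hCupos⟩ ?_)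
    calc P ((fun ω => (ζ ω - t, V ω)) ⁻¹' Cu) / m Cu
        ≤ (a * (c * m Cu)) / m Cu := ENNReal.div_le_div_right hPnum _
      _ = (a * c) * (m Cu / m Cu) := by rw [← mul_assoc, mul_div_assoc]
      _ = c * a := by
          rw [ENNReal.div_self hCupos.ne' (measure_ne_top m Cu), mul_one, mul_comm]
  refine le_antisymm ?_ (le_iInf fun C => le_iInf fun hC => hlow C hC.1 hC.2)
  apply ENNReal.le_of_forall_pos_le_add
  intro ε hε _hlt
  have hεne : (ε : ℝ≥0∞) ≠ 0 := by exact_mod_cast hε.ne'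
  have hJa : J < J + ε := ENNReal.lt_add_right hJtop hεne
  calc (⨅ (C : Set (ℝ × S)) (_ : MeasurableSet C ∧ 0 < m C),
        P ((fun ω => (ζ ω - t, V ω)) ⁻¹' C) / m C)
      ≤ c * (J + ε) := hupper _ hJa (ENNReal.add_ne_top.2 ⟨hJtop, ENNReal.coe_ne_top⟩)
    _ = c * J + c * ε := mul_add _ _ _
    _ ≤ c * J + ε := by
        refine add_le_add le_rfl ?_
        calc c * (ε : ℝ≥0∞) ≤ 1 * ε := mul_le_mul_left hc1 _
          _ = ε := one_mul _
end

section
/- If ζ̂ is a nonnegative integer-valued random variable defined on the same probability space as (ζ,V) such that ℙ(ζ̂ ≤ ζ) = 1 and, for every t ∈ ℤ₊ with ℙ(ζ̂ ≤ t, ζ > t) > 0, the conditional distribution of (ζ − t, V) given {ζ̂ ≤ t, ζ > t} equals ν_γ × μ, then σ(t) := ℙ(ζ̂ ≤ t, ζ > t) satisfies condition (3.1)′ and G(t) = σ(t)(1−γ)^{−t} is nondecreasing on ℤ₊. -/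
open MeasureTheory ProbabilityTheory Real Set

noncomputable def geomν (γ : ℝ) : Measure ℕ :=
  MeasureTheory.Measure.count.withDensity
    (fun k => if k = 0 then 0 else ENNReal.ofReal (γ * (1 - γ) ^ (k - 1)))

lemma geomν_apply (γ : ℝ) (A : Set ℕ) : geomν γ A =
    ∑' k, A.indicator (fun k => if k = 0 then 0 else ENNReal.ofReal (γ * (1 - γ) ^ (k - 1))) k := by
  rw [geomν, withDensity_apply _ (.of_discrete : MeasurableSet A),
    ← lintegral_indicator (.of_discrete : MeasurableSet A), lintegral_count]

lemma geomν_tail (γ : ℝ) (hγ : 0 < γ) (hγ1 : γ ≤ 1) (m : ℕ) :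
    geomν γ {k | m < k} = ENNReal.ofReal ((1 - γ) ^ m) := by
  have h01 : (0:ℝ) ≤ 1 - γ := by linarith
  have h11 : (1 - γ) < 1 := by linarith
  set g : ℕ → ℝ := fun k => if m < k then γ * (1 - γ) ^ (k - 1) else 0 with hg
  have hind : ∀ k, ({k | m < k} : Set ℕ).indicator
      (fun k => if k = 0 then 0 else ENNReal.ofReal (γ * (1 - γ) ^ (k - 1))) k
      = ENNReal.ofReal (g k) := by
    intro k
    by_cases hk : m < k
    · have : k ≠ 0 := by omega
      simp [Set.indicator, hk, this, hg]
    · simp [Set.indicator, hk, hg]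
  have hshift : ∀ i : ℕ, g (i + (m + 1)) = (γ * (1 - γ) ^ m) * (1 - γ) ^ i := by
    intro i
    have : m < i + (m + 1) := by omega
    simp only [hg, this, if_pos]
    have : i + (m + 1) - 1 = m + i := by omega
    rw [this, pow_add]
    ring
  have hsum' : Summable fun i : ℕ => g (i + (m + 1)) := by
    simp only [hshift]
    exact (summable_geometric_of_lt_one h01 h11).mul_left _
  have hsum : Summable g := (summable_nat_add_iff (m + 1)).mp hsum'
  have hnn : ∀ k, 0 ≤ g k := by
    intro k
    by_cases hk : m < k
    · simp only [hg, if_pos hk]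
      positivity
    · simp [hg, hk]
  have htsum : ∑' k, g k = (1 - γ) ^ m := by
    rw [← hsum.sum_add_tsum_nat_add (m + 1)]
    have h0 : ∑ i ∈ Finset.range (m + 1), g i = 0 := by
      apply Finset.sum_eq_zero
      intro i hi
      simp only [Finset.mem_range] at hi
      simp [hg, show ¬ m < i by omega]
    rw [h0, zero_add]
    simp only [hshift]
    rw [tsum_mul_left, tsum_geometric_of_lt_one h01 h11]
    rw [sub_sub_cancel]
    field_simp [hγ.ne']
  rw [geomν_apply]
  simp only [hind]
  rw [← ENNReal.ofReal_tsum_of_nonneg hnn hsum, htsum]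

/-- Theorem 3.4 (lattice converse part): if `ζ̂` is a strong memoryless time for `(ζ, V)`
with parameters `(γ, μ)`, then `σ(t) := ℙ(ζ̂ ≤ t, ζ > t)` satisfies condition (3.1)′,
and `G(t) = σ(t)(1−γ)^{−t}` is nondecreasing on `ℤ₊` (stated in the equivalent
cross-multiplied form). -/
theorem stmt_11 {Ω : Type*} [MeasurableSpace Ω] (P : Measure Ω) [IsProbabilityMeasure P]
    {S : Type*} [MeasurableSpace S] (μ : Measure S) [IsProbabilityMeasure μ]
    (γ : ℝ) (hγ : 0 < γ) (hγ1 : γ ≤ 1)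
    (ζ : Ω → ℕ) (V : Ω → S) (hζm : Measurable ζ) (hVm : Measurable V)
    (ζhat : Ω → ℕ) (hζhatm : Measurable ζhat)
    (hle : P {ω | ζhat ω ≤ ζ ω} = 1)
    (hcond : ∀ t : ℕ, 0 < P {ω | ζhat ω ≤ t ∧ t < ζ ω} →
      Measure.map (fun ω => (ζ ω - t, V ω)) (P[|{ω | ζhat ω ≤ t ∧ t < ζ ω}]) =
        (geomν γ).prod μ) :
    (∀ t : ℕ, ∀ C : Set (ℕ × S), MeasurableSet C →
      0 < ((geomν γ).prod μ) C →
      ENNReal.ofReal ((P {ω | ζhat ω ≤ t ∧ t < ζ ω}).toReal) ≤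
        P ((fun ω => (ζ ω - t, V ω)) ⁻¹' C) / ((geomν γ).prod μ) C) ∧
    (∀ s t : ℕ, s ≤ t →
      (P {ω | ζhat ω ≤ s ∧ s < ζ ω}).toReal * (1 - γ) ^ t ≤
        (P {ω | ζhat ω ≤ t ∧ t < ζ ω}).toReal * (1 - γ) ^ s) := by
  have hAmeas : ∀ t : ℕ, MeasurableSet {ω | ζhat ω ≤ t ∧ t < ζ ω} := by
    intro t
    have : {ω | ζhat ω ≤ t ∧ t < ζ ω} = ζhat ⁻¹' (Iic t) ∩ ζ ⁻¹' (Ioi t) := rfl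
    rw [this]
    exact (hζhatm measurableSet_Iic).inter (hζm measurableSet_Ioi)
  have hfm : ∀ t : ℕ, Measurable (fun ω => (ζ ω - t, V ω)) := fun t =>
    (((measurable_from_top (f := fun n : ℕ => n - t)).comp hζm).prodMk hVm)
  -- key equality: P (A ∩ f⁻¹' C) = P A * (νμ C) whenever C measurable and P A > 0
  have key : ∀ t : ℕ, ∀ C : Set (ℕ × S), MeasurableSet C →
      0 < P {ω | ζhat ω ≤ t ∧ t < ζ ω} →
      P ({ω | ζhat ω ≤ t ∧ t < ζ ω} ∩ (fun ω => (ζ ω - t, V ω)) ⁻¹' C) =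
        P {ω | ζhat ω ≤ t ∧ t < ζ ω} * ((geomν γ).prod μ) C := by
    intro t C hC hpos
    set A := {ω | ζhat ω ≤ t ∧ t < ζ ω} with hA
    have heq := hcond t hpos
    have h1 : (P A)⁻¹ * P (A ∩ (fun ω => (ζ ω - t, V ω)) ⁻¹' C) = ((geomν γ).prod μ) C := by
      rw [← cond_apply (hAmeas t), ← Measure.map_apply (hfm t) hC, heq]
    rw [← h1, ← mul_assoc, ENNReal.mul_inv_cancel hpos.ne' (measure_ne_top P A), one_mul]
  constructor
  · intro t C hC hCpos
    rcases eq_or_lt_of_le (zero_le : (0:ENNReal) ≤ P {ω | ζhat ω ≤ t ∧ t < ζ ω}) with h0 | hpos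
    · rw [← h0]; simp
    rw [ENNReal.ofReal_toReal (measure_ne_top P _),
      ENNReal.le_div_iff_mul_le (Or.inl hCpos.ne') (Or.inr (measure_ne_top P _))]
    rw [← key t C hC hpos]
    exact measure_mono inter_subset_right
  · intro s t hst
    set As := {ω | ζhat ω ≤ s ∧ s < ζ ω} with hAs
    rcases eq_or_lt_of_le (zero_le : (0:ENNReal) ≤ P As) with h0 | hpos
    · rw [← h0]
      simp only [ENNReal.toReal_zero, zero_mul]
      exact mul_nonneg ENNReal.toReal_nonneg (pow_nonneg (by linarith) _)
    set C : Set (ℕ × S) := {k | t - s < k} ×ˢ univ with hCdef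
    have hC : MeasurableSet C := MeasurableSet.prod .of_discrete MeasurableSet.univ
    have hCval : ((geomν γ).prod μ) C = ENNReal.ofReal ((1 - γ) ^ (t - s)) := by
      rw [hCdef, Measure.prod_prod, geomν_tail γ hγ hγ1, measure_univ, mul_one]
    have hinter : As ∩ (fun ω => (ζ ω - s, V ω)) ⁻¹' C = {ω | ζhat ω ≤ s ∧ t < ζ ω} := by
      ext ω
      simp only [hAs, hCdef, mem_inter_iff, mem_preimage, mem_prod, mem_setOf_eq, mem_univ,
        and_true]
      omega
    have h3 : P As * ENNReal.ofReal ((1 - γ) ^ (t - s)) ≤ P {ω | ζhat ω ≤ t ∧ t < ζ ω} := by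
      rw [← hCval, ← key s C hC hpos, hinter]
      exact measure_mono fun ω hω => ⟨le_trans hω.1 hst, hω.2⟩
    have h4 : (P As).toReal * (1 - γ) ^ (t - s) ≤ (P {ω | ζhat ω ≤ t ∧ t < ζ ω}).toReal := by
      have := ENNReal.toReal_mono (measure_ne_top P _) h3
      rwa [ENNReal.toReal_mul, ENNReal.toReal_ofReal (pow_nonneg (by linarith) _)] at this
    have hpow : (1 - γ) ^ t = (1 - γ) ^ (t - s) * (1 - γ) ^ s := by
      rw [← pow_add, Nat.sub_add_cancel hst]
    rw [hpow, ← mul_assoc]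
    exact mul_le_mul_of_nonneg_right h4 (pow_nonneg (by linarith) _)
end

section
/- Let ζ̂ be a nonnegative integer-valued random variable defined on the same probability space as (ζ,V) such that ℙ(ζ̂ ≤ ζ) = 1 and, for every t ∈ ℤ₊ with ℙ(ζ̂ ≤ t, ζ > t) > 0, the conditional distribution of (ζ − t, V) given {ζ̂ ≤ t, ζ > t} equals ν_γ × μ; set σ(t) = ℙ(ζ̂ ≤ t, ζ > t). Then for all s, t, u ∈ ℤ₊ and A ∈ 𝒮: (i) ℙ(ζ̂ ≤ s, 0 < ζ − ζ̂ ≤ u, V ∈ A) = ℙ(ζ̂ ≤ s, ζ̂ < ζ)·(1 − (1−γ)^u)·μ(A); (ii) ℙ(ζ̂ ≤ t, ζ̂ < ζ) = σ(t) + γ∑_{i=0}^{t−1} σ(i); (iii) ℙ(ζ̂ = ζ ≤ t, V ∈ A) = ℙ(ζ ≤ t, V ∈ A) − μ(A)·γ∑_{i=0}^{t−1} σ(i). -/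
open MeasureTheory ProbabilityTheory Real Set

lemma meas_aux {Ω S : Type*} [MeasurableSpace Ω] [MeasurableSpace S]
    {ζ ζhat : Ω → ℕ} {V : Ω → S} (hζ : Measurable ζ) (hζhat : Measurable ζhat)
    (hV : Measurable V) (T : Set (ℕ × ℕ)) {A : Set S} (hA : MeasurableSet A)
    {E : Set Ω} (hE : ∀ ω, ω ∈ E ↔ (ζhat ω, ζ ω) ∈ T ∧ V ω ∈ A) :
    MeasurableSet E := by
  have h : E = {ω | (ζhat ω, ζ ω) ∈ T} ∩ V ⁻¹' A := Set.ext fun ω => hE ω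
  rw [h]
  exact ((hζhat.prodMk hζ) T.to_countable.measurableSet).inter (hV hA)

lemma geom_finset (γ : ℝ) (F : Finset ℕ) :
    geomν γ ↑F =
      ∑ k ∈ F, (if k = 0 then 0 else ENNReal.ofReal (γ * (1 - γ) ^ (k - 1))) := by
  rw [geomν, withDensity_apply _ F.measurableSet, lintegral_finset]
  simp [Measure.count_singleton]

lemma geom_real_sum (γ : ℝ) (u : ℕ) :
    ∑ k ∈ Finset.range u, γ * (1 - γ) ^ k = 1 - (1 - γ) ^ u := by
  rw [← Finset.mul_sum]
  have h := geom_sum_mul (1 - γ) u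
  linear_combination -h

lemma geom_Iic (γ : ℝ) (hγ0 : 0 ≤ γ) (hγ1 : γ ≤ 1) (u : ℕ) :
    geomν γ {k | k ≤ u} = ENNReal.ofReal (1 - (1 - γ) ^ u) := by
  have hx0 : (0 : ℝ) ≤ 1 - γ := by linarith
  have hs : {k | k ≤ u} = (↑(Finset.range (u + 1)) : Set ℕ) := by
    ext k; simp [Nat.lt_succ_iff]
  rw [hs, geom_finset, Finset.sum_range_succ']
  norm_num
  rw [← ENNReal.ofReal_sum_of_nonneg
    (fun i _ => mul_nonneg hγ0 (pow_nonneg hx0 i)), geom_real_sum]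

lemma geom_Icc2 (γ : ℝ) (hγ0 : 0 ≤ γ) (hγ1 : γ ≤ 1) (u : ℕ) :
    geomν γ {k | 2 ≤ k ∧ k ≤ u + 1} =
      ENNReal.ofReal ((1 - γ) * (1 - (1 - γ) ^ u)) := by
  have hx0 : (0 : ℝ) ≤ 1 - γ := by linarith
  have hs : {k | 2 ≤ k ∧ k ≤ u + 1} = (↑(Finset.Ico 2 (u + 2)) : Set ℕ) := by
    ext k; simp [Nat.lt_succ_iff]
  rw [hs, geom_finset, Finset.sum_Ico_eq_sum_range]
  have hterm : ∀ k ∈ Finset.range (u + 2 - 2),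
      (if 2 + k = 0 then 0 else ENNReal.ofReal (γ * (1 - γ) ^ (2 + k - 1))) =
        ENNReal.ofReal ((1 - γ) * (γ * (1 - γ) ^ k)) := by
    intro k _
    have h1 : 2 + k ≠ 0 := by omega
    have h2 : 2 + k - 1 = k + 1 := by omega
    rw [if_neg h1, h2]
    congr 1
    ring
  rw [Finset.sum_congr rfl hterm]
  rw [← ENNReal.ofReal_sum_of_nonneg
    (fun i _ => mul_nonneg hx0 (mul_nonneg hγ0 (pow_nonneg hx0 i))),
    ← Finset.mul_sum]
  have : u + 2 - 2 = u := by omega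
  rw [this, geom_real_sum]

lemma geom_one (γ : ℝ) : geomν γ {1} = ENNReal.ofReal γ := by
  have hs : ({1} : Set ℕ) = (↑({1} : Finset ℕ) : Set ℕ) := by simp
  rw [hs, geom_finset, Finset.sum_singleton]
  norm_num

/-- Theorem 3.5 (lattice version of Theorem 3.2): if `ζ̂` is a strong memoryless time for
`(ζ, V)` with parameters `(γ, μ)` and `σ(t) = ℙ(ζ̂ ≤ t, ζ > t)`, then
(i)  `ℙ(ζ̂ ≤ s, 0 < ζ − ζ̂ ≤ u, V ∈ A) = ℙ(ζ̂ ≤ s, ζ̂ < ζ)(1 − (1−γ)^u)μ(A)`;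
(ii) `ℙ(ζ̂ ≤ t, ζ̂ < ζ) = σ(t) + γ∑_{i=0}^{t−1} σ(i)`;
(iii) `ℙ(ζ̂ = ζ ≤ t, V ∈ A) = ℙ(ζ ≤ t, V ∈ A) − μ(A)γ∑_{i=0}^{t−1} σ(i)`. -/
theorem stmt_12 {Ω : Type*} [MeasurableSpace Ω] (P : Measure Ω) [IsProbabilityMeasure P]
    {S : Type*} [MeasurableSpace S] (μ : Measure S) [IsProbabilityMeasure μ]
    (γ : ℝ) (hγ : 0 < γ) (hγ1 : γ ≤ 1)
    (ζ : Ω → ℕ) (V : Ω → S) (hζm : Measurable ζ) (hVm : Measurable V)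
    (ζhat : Ω → ℕ) (hζhatm : Measurable ζhat)
    (hle : P {ω | ζhat ω ≤ ζ ω} = 1)
    (hcond : ∀ t : ℕ, 0 < P {ω | ζhat ω ≤ t ∧ t < ζ ω} →
      Measure.map (fun ω => (ζ ω - t, V ω)) (P[|{ω | ζhat ω ≤ t ∧ t < ζ ω}]) =
        (geomν γ).prod μ)
    (σ : ℕ → ℝ) (hσdef : ∀ t : ℕ, σ t = (P {ω | ζhat ω ≤ t ∧ t < ζ ω}).toReal) :
    (∀ s u : ℕ, ∀ A : Set S, MeasurableSet A →
      P {ω | ζhat ω ≤ s ∧ ζhat ω < ζ ω ∧ ζ ω - ζhat ω ≤ u ∧ V ω ∈ A} =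
        P {ω | ζhat ω ≤ s ∧ ζhat ω < ζ ω} *
          (ENNReal.ofReal (1 - (1 - γ) ^ u) * μ A)) ∧
    (∀ t : ℕ,
      P {ω | ζhat ω ≤ t ∧ ζhat ω < ζ ω} =
        ENNReal.ofReal (σ t + γ * ∑ i ∈ Finset.range t, σ i)) ∧
    (∀ t : ℕ, ∀ A : Set S, MeasurableSet A →
      P {ω | ζhat ω = ζ ω ∧ ζ ω ≤ t ∧ V ω ∈ A} =
        P {ω | ζ ω ≤ t ∧ V ω ∈ A} -
          μ A * ENNReal.ofReal (γ * ∑ i ∈ Finset.range t, σ i)) := by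
  -- basic facts
  have hx0 : (0 : ℝ) ≤ 1 - γ := by linarith
  have hσ0 : ∀ i, 0 ≤ σ i := fun i => by rw [hσdef]; exact ENNReal.toReal_nonneg
  have hsum0 : ∀ t, 0 ≤ ∑ i ∈ Finset.range t, σ i :=
    fun t => Finset.sum_nonneg fun i _ => hσ0 i
  have hc0 : ∀ u : ℕ, 0 ≤ 1 - (1 - γ) ^ u := fun u => by
    have := pow_le_one₀ (n := u) hx0 (by linarith : 1 - γ ≤ 1); linarith
  have hPE : ∀ t, P {ω | ζhat ω ≤ t ∧ t < ζ ω} = ENNReal.ofReal (σ t) := fun t => by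
    rw [hσdef, ENNReal.ofReal_toReal (measure_ne_top P _)]
  have hmE : ∀ t, MeasurableSet {ω | ζhat ω ≤ t ∧ t < ζ ω} := fun t =>
    meas_aux hζm hζhatm hVm {p | p.1 ≤ t ∧ t < p.2} MeasurableSet.univ
      (fun ω => by simp [Set.mem_setOf_eq])
  -- master lemma
  have key : ∀ (t : ℕ) (B : Set ℕ) (A : Set S), MeasurableSet A →
      P {ω | ζhat ω ≤ t ∧ t < ζ ω ∧ ζ ω - t ∈ B ∧ V ω ∈ A} =
        ENNReal.ofReal (σ t) * (geomν γ B * μ A) := by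
    intro t B A hA
    have hsub : {ω | ζhat ω ≤ t ∧ t < ζ ω ∧ ζ ω - t ∈ B ∧ V ω ∈ A} =
        {ω | ζhat ω ≤ t ∧ t < ζ ω} ∩ ((fun ω => (ζ ω - t, V ω)) ⁻¹' (B ×ˢ A)) := by
      ext ω; simp only [Set.mem_setOf_eq, Set.mem_inter_iff, Set.mem_preimage,
        Set.mem_prod]; tauto
    rcases eq_or_ne (P {ω | ζhat ω ≤ t ∧ t < ζ ω}) 0 with h0 | hne
    · have hz : P {ω | ζhat ω ≤ t ∧ t < ζ ω ∧ ζ ω - t ∈ B ∧ V ω ∈ A} = 0 := by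
        rw [hsub]; exact measure_mono_null Set.inter_subset_left h0
      rw [hz, ← hPE t, h0, zero_mul]
    · have hpos : 0 < P {ω | ζhat ω ≤ t ∧ t < ζ ω} := hne.bot_lt
      have hBm : MeasurableSet B := B.to_countable.measurableSet
      have h1 := congrArg (fun m : Measure (ℕ × S) => m (B ×ˢ A)) (hcond t hpos)
      rw [Measure.map_apply (f := fun ω => (ζ ω - t, V ω))
        ((hζm.sub_const t).prodMk hVm) (hBm.prod hA),
        Measure.prod_prod, cond_apply (hmE t)] at h1
      rw [hsub, ← hPE t]
      calc P ({ω | ζhat ω ≤ t ∧ t < ζ ω} ∩ ((fun ω => (ζ ω - t, V ω)) ⁻¹' (B ×ˢ A)))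
          = P {ω | ζhat ω ≤ t ∧ t < ζ ω} * ((P {ω | ζhat ω ≤ t ∧ t < ζ ω})⁻¹ *
            P ({ω | ζhat ω ≤ t ∧ t < ζ ω} ∩ ((fun ω => (ζ ω - t, V ω)) ⁻¹' (B ×ˢ A)))) := by
            rw [← mul_assoc, ENNReal.mul_inv_cancel hne (measure_ne_top P _), one_mul]
        _ = P {ω | ζhat ω ≤ t ∧ t < ζ ω} * (geomν γ B * μ A) := by rw [h1]
  -- specialized versions
  have keyIic : ∀ (t u : ℕ) (A : Set S), MeasurableSet A →
      P {ω | ζhat ω ≤ t ∧ t < ζ ω ∧ ζ ω - t ≤ u ∧ V ω ∈ A} =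
        ENNReal.ofReal (σ t * (1 - (1 - γ) ^ u)) * μ A := by
    intro t u A hA
    have h := key t {k | k ≤ u} A hA
    rw [geom_Iic γ hγ.le hγ1 u] at h
    rw [show {ω | ζhat ω ≤ t ∧ t < ζ ω ∧ ζ ω - t ≤ u ∧ V ω ∈ A} =
      {ω | ζhat ω ≤ t ∧ t < ζ ω ∧ ζ ω - t ∈ {k | k ≤ u} ∧ V ω ∈ A} from rfl, h,
      ← mul_assoc, ← ENNReal.ofReal_mul (hσ0 t)]
  have keySing : ∀ (t : ℕ) (A : Set S), MeasurableSet A →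
      P {ω | ζhat ω ≤ t ∧ ζ ω = t + 1 ∧ V ω ∈ A} =
        ENNReal.ofReal (σ t * γ) * μ A := by
    intro t A hA
    have h := key t {1} A hA
    rw [geom_one γ] at h
    have hset : {ω | ζhat ω ≤ t ∧ ζ ω = t + 1 ∧ V ω ∈ A} =
        {ω | ζhat ω ≤ t ∧ t < ζ ω ∧ ζ ω - t ∈ ({1} : Set ℕ) ∧ V ω ∈ A} := by
      ext ω
      simp only [Set.mem_setOf_eq, Set.mem_singleton_iff]
      constructor
      · rintro ⟨h1, h2, h3⟩; exact ⟨h1, by omega, by omega, h3⟩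
      · rintro ⟨h1, h2, h3, h4⟩; exact ⟨h1, by omega, h4⟩
    rw [hset, h, ← mul_assoc, ← ENNReal.ofReal_mul (hσ0 t)]
  have key2 : ∀ (t u : ℕ) (A : Set S), MeasurableSet A →
      P {ω | ζhat ω ≤ t ∧ t + 1 < ζ ω ∧ ζ ω ≤ t + 1 + u ∧ V ω ∈ A} =
        ENNReal.ofReal (σ t * ((1 - γ) * (1 - (1 - γ) ^ u))) * μ A := by
    intro t u A hA
    have h := key t {k | 2 ≤ k ∧ k ≤ u + 1} A hA
    rw [geom_Icc2 γ hγ.le hγ1 u] at h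
    have hset : {ω | ζhat ω ≤ t ∧ t + 1 < ζ ω ∧ ζ ω ≤ t + 1 + u ∧ V ω ∈ A} =
        {ω | ζhat ω ≤ t ∧ t < ζ ω ∧ ζ ω - t ∈ {k | 2 ≤ k ∧ k ≤ u + 1} ∧ V ω ∈ A} := by
      ext ω
      simp only [Set.mem_setOf_eq]
      constructor
      · rintro ⟨h1, h2, h3, h4⟩; exact ⟨h1, by omega, ⟨by omega, by omega⟩, h4⟩
      · rintro ⟨h1, h2, ⟨h3, h3'⟩, h4⟩; exact ⟨h1, by omega, by omega, h4⟩
    rw [hset, h, ← mul_assoc, ← ENNReal.ofReal_mul (hσ0 t)]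
  -- the increment lemma
  have hR : ∀ (A : Set S), MeasurableSet A → ∀ t : ℕ,
      P {ω | ζhat ω < ζ ω ∧ ζ ω ≤ t ∧ V ω ∈ A} =
        ENNReal.ofReal (γ * ∑ i ∈ Finset.range t, σ i) * μ A := by
    intro A hA t
    induction t with
    | zero =>
      have hempty : {ω | ζhat ω < ζ ω ∧ ζ ω ≤ 0 ∧ V ω ∈ A} = ∅ := by
        ext ω; simp only [Set.mem_setOf_eq, Set.mem_empty_iff_false, iff_false]
        rintro ⟨h1, h2, _⟩; omega
      rw [hempty]
      simp
    | succ t ih =>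
      have hsplit : {ω | ζhat ω < ζ ω ∧ ζ ω ≤ t + 1 ∧ V ω ∈ A} =
          {ω | ζhat ω < ζ ω ∧ ζ ω ≤ t ∧ V ω ∈ A} ∪
            {ω | ζhat ω ≤ t ∧ ζ ω = t + 1 ∧ V ω ∈ A} := by
        ext ω
        simp only [Set.mem_setOf_eq, Set.mem_union]
        constructor
        · rintro ⟨h1, h2, h3⟩
          rcases Nat.lt_succ_iff_lt_or_eq.mp (Nat.lt_succ_of_le h2) with h | h
          · exact Or.inl ⟨h1, by omega, h3⟩
          · exact Or.inr ⟨by omega, h, h3⟩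
        · rintro (⟨h1, h2, h3⟩ | ⟨h1, h2, h3⟩)
          · exact ⟨h1, by omega, h3⟩
          · exact ⟨by omega, by omega, h3⟩
      have hdisj : Disjoint {ω | ζhat ω < ζ ω ∧ ζ ω ≤ t ∧ V ω ∈ A}
          {ω | ζhat ω ≤ t ∧ ζ ω = t + 1 ∧ V ω ∈ A} := by
        rw [Set.disjoint_left]
        rintro ω ⟨_, h2, _⟩ ⟨_, h2', _⟩; omega
      have hm2 : MeasurableSet {ω | ζhat ω ≤ t ∧ ζ ω = t + 1 ∧ V ω ∈ A} :=
        meas_aux hζm hζhatm hVm {p | p.1 ≤ t ∧ p.2 = t + 1} hA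
          (fun ω => by simp only [Set.mem_setOf_eq]; tauto)
      rw [hsplit, measure_union hdisj hm2, ih, keySing t A hA, ← add_mul,
        ← ENNReal.ofReal_add (mul_nonneg hγ.le (hsum0 t)) (mul_nonneg (hσ0 t) hγ.le)]
      congr 2
      rw [Finset.sum_range_succ]; ring
  -- part (ii)
  have part2 : ∀ t : ℕ,
      P {ω | ζhat ω ≤ t ∧ ζhat ω < ζ ω} =
        ENNReal.ofReal (σ t + γ * ∑ i ∈ Finset.range t, σ i) := by
    intro t
    have hsplit : {ω | ζhat ω ≤ t ∧ ζhat ω < ζ ω} =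
        {ω | ζhat ω ≤ t ∧ t < ζ ω} ∪
          {ω | ζhat ω < ζ ω ∧ ζ ω ≤ t ∧ V ω ∈ (Set.univ : Set S)} := by
      ext ω
      simp only [Set.mem_setOf_eq, Set.mem_union, Set.mem_univ, and_true]
      omega
    have hdisj : Disjoint {ω | ζhat ω ≤ t ∧ t < ζ ω}
        {ω | ζhat ω < ζ ω ∧ ζ ω ≤ t ∧ V ω ∈ (Set.univ : Set S)} := by
      rw [Set.disjoint_left]
      rintro ω ⟨_, h2⟩ ⟨_, h2', _⟩; omega
    have hm2 : MeasurableSet {ω | ζhat ω < ζ ω ∧ ζ ω ≤ t ∧ V ω ∈ (Set.univ : Set S)} :=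
      meas_aux hζm hζhatm hVm {p | p.1 < p.2 ∧ p.2 ≤ t} MeasurableSet.univ
        (fun ω => by simp only [Set.mem_setOf_eq]; tauto)
    rw [hsplit, measure_union hdisj hm2, hPE t, hR Set.univ MeasurableSet.univ t]
    simp only [measure_univ, mul_one]
    rw [← ENNReal.ofReal_add (hσ0 t) (mul_nonneg hγ.le (hsum0 t))]
  -- part (i)
  have part1' : ∀ (u : ℕ) (A : Set S), MeasurableSet A → ∀ s : ℕ,
      P {ω | ζhat ω ≤ s ∧ ζhat ω < ζ ω ∧ ζ ω - ζhat ω ≤ u ∧ V ω ∈ A} =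
        ENNReal.ofReal ((σ s + γ * ∑ i ∈ Finset.range s, σ i) * (1 - (1 - γ) ^ u)) *
          μ A := by
    intro u A hA s
    induction s with
    | zero =>
      have hset : {ω | ζhat ω ≤ 0 ∧ ζhat ω < ζ ω ∧ ζ ω - ζhat ω ≤ u ∧ V ω ∈ A} =
          {ω | ζhat ω ≤ 0 ∧ 0 < ζ ω ∧ ζ ω - 0 ≤ u ∧ V ω ∈ A} := by
        ext ω
        simp only [Set.mem_setOf_eq]
        constructor
        · rintro ⟨h1, h2, h3, h4⟩; exact ⟨h1, by omega, by omega, h4⟩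
        · rintro ⟨h1, h2, h3, h4⟩; exact ⟨h1, by omega, by omega, h4⟩
      rw [hset, keyIic 0 u A hA]
      congr 2
      simp
    | succ s ih =>
      have hsplit : {ω | ζhat ω ≤ s + 1 ∧ ζhat ω < ζ ω ∧ ζ ω - ζhat ω ≤ u ∧ V ω ∈ A} =
          {ω | ζhat ω ≤ s ∧ ζhat ω < ζ ω ∧ ζ ω - ζhat ω ≤ u ∧ V ω ∈ A} ∪
            {ω | ζhat ω = s + 1 ∧ s + 1 < ζ ω ∧ ζ ω ≤ s + 1 + u ∧ V ω ∈ A} := by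
        ext ω
        simp only [Set.mem_setOf_eq, Set.mem_union]
        constructor
        · rintro ⟨h1, h2, h3, h4⟩
          rcases Nat.lt_succ_iff_lt_or_eq.mp (Nat.lt_succ_of_le h1) with h | h
          · exact Or.inl ⟨by omega, h2, h3, h4⟩
          · exact Or.inr ⟨h, by omega, by omega, h4⟩
        · rintro (⟨h1, h2, h3, h4⟩ | ⟨h1, h2, h3, h4⟩)
          · exact ⟨by omega, h2, h3, h4⟩
          · exact ⟨by omega, by omega, by omega, h4⟩
      have hdisj : Disjoint {ω | ζhat ω ≤ s ∧ ζhat ω < ζ ω ∧ ζ ω - ζhat ω ≤ u ∧ V ω ∈ A}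
          {ω | ζhat ω = s + 1 ∧ s + 1 < ζ ω ∧ ζ ω ≤ s + 1 + u ∧ V ω ∈ A} := by
        rw [Set.disjoint_left]
        rintro ω ⟨h1, _, _, _⟩ ⟨h1', _, _, _⟩; omega
      have hmNew : MeasurableSet
          {ω | ζhat ω = s + 1 ∧ s + 1 < ζ ω ∧ ζ ω ≤ s + 1 + u ∧ V ω ∈ A} :=
        meas_aux hζm hζhatm hVm {p | p.1 = s + 1 ∧ s + 1 < p.2 ∧ p.2 ≤ s + 1 + u} hA
          (fun ω => by simp only [Set.mem_setOf_eq]; tauto)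
      -- second decomposition giving the measure of the new piece
      have hsplit2 : {ω | ζhat ω ≤ s + 1 ∧ s + 1 < ζ ω ∧ ζ ω - (s + 1) ≤ u ∧ V ω ∈ A} =
          {ω | ζhat ω ≤ s ∧ s + 1 < ζ ω ∧ ζ ω ≤ s + 1 + u ∧ V ω ∈ A} ∪
            {ω | ζhat ω = s + 1 ∧ s + 1 < ζ ω ∧ ζ ω ≤ s + 1 + u ∧ V ω ∈ A} := by
        ext ω
        simp only [Set.mem_setOf_eq, Set.mem_union]
        constructor
        · rintro ⟨h1, h2, h3, h4⟩
          rcases Nat.lt_succ_iff_lt_or_eq.mp (Nat.lt_succ_of_le h1) with h | h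
          · exact Or.inl ⟨by omega, h2, by omega, h4⟩
          · exact Or.inr ⟨h, h2, by omega, h4⟩
        · rintro (⟨h1, h2, h3, h4⟩ | ⟨h1, h2, h3, h4⟩)
          · exact ⟨by omega, h2, by omega, h4⟩
          · exact ⟨by omega, h2, by omega, h4⟩
      have hdisj2 : Disjoint {ω | ζhat ω ≤ s ∧ s + 1 < ζ ω ∧ ζ ω ≤ s + 1 + u ∧ V ω ∈ A}
          {ω | ζhat ω = s + 1 ∧ s + 1 < ζ ω ∧ ζ ω ≤ s + 1 + u ∧ V ω ∈ A} := by
        rw [Set.disjoint_left]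
        rintro ω ⟨h1, _, _, _⟩ ⟨h1', _, _, _⟩; omega
      have hEq1 : ENNReal.ofReal (σ (s + 1) * (1 - (1 - γ) ^ u)) * μ A =
          ENNReal.ofReal (σ s * ((1 - γ) * (1 - (1 - γ) ^ u))) * μ A +
            P {ω | ζhat ω = s + 1 ∧ s + 1 < ζ ω ∧ ζ ω ≤ s + 1 + u ∧ V ω ∈ A} := by
        rw [← keyIic (s + 1) u A hA, ← key2 s u A hA, ← measure_union hdisj2 hmNew,
          ← hsplit2]
      have hX : ENNReal.ofReal (σ s * ((1 - γ) * (1 - (1 - γ) ^ u))) * μ A ≠ ⊤ :=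
        ENNReal.mul_ne_top ENNReal.ofReal_ne_top (measure_ne_top μ A)
      refine (ENNReal.add_left_inj hX).mp ?_
      rw [hsplit, measure_union hdisj hmNew, ih]
      calc ENNReal.ofReal ((σ s + γ * ∑ i ∈ Finset.range s, σ i) * (1 - (1 - γ) ^ u)) * μ A +
            P {ω | ζhat ω = s + 1 ∧ s + 1 < ζ ω ∧ ζ ω ≤ s + 1 + u ∧ V ω ∈ A} +
            ENNReal.ofReal (σ s * ((1 - γ) * (1 - (1 - γ) ^ u))) * μ A
          = ENNReal.ofReal ((σ s + γ * ∑ i ∈ Finset.range s, σ i) * (1 - (1 - γ) ^ u)) * μ A +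
            (ENNReal.ofReal (σ s * ((1 - γ) * (1 - (1 - γ) ^ u))) * μ A +
              P {ω | ζhat ω = s + 1 ∧ s + 1 < ζ ω ∧ ζ ω ≤ s + 1 + u ∧ V ω ∈ A}) := by
            ring
        _ = ENNReal.ofReal ((σ s + γ * ∑ i ∈ Finset.range s, σ i) * (1 - (1 - γ) ^ u)) * μ A +
            ENNReal.ofReal (σ (s + 1) * (1 - (1 - γ) ^ u)) * μ A := by
            rw [← hEq1]
        _ = ENNReal.ofReal ((σ (s + 1) + γ * ∑ i ∈ Finset.range (s + 1), σ i) *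
              (1 - (1 - γ) ^ u)) * μ A +
            ENNReal.ofReal (σ s * ((1 - γ) * (1 - (1 - γ) ^ u))) * μ A := by
            rw [← add_mul, ← add_mul,
              ← ENNReal.ofReal_add
                (mul_nonneg (add_nonneg (hσ0 s) (mul_nonneg hγ.le (hsum0 s))) (hc0 u))
                (mul_nonneg (hσ0 (s + 1)) (hc0 u)),
              ← ENNReal.ofReal_add
                (mul_nonneg (add_nonneg (hσ0 (s + 1)) (mul_nonneg hγ.le (hsum0 (s + 1))))
                  (hc0 u))
                (mul_nonneg (hσ0 s) (mul_nonneg hx0 (hc0 u)))]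
            congr 2
            rw [Finset.sum_range_succ]; ring
  refine ⟨?_, part2, ?_⟩
  · intro s u A hA
    rw [part1' u A hA s, part2 s, ← mul_assoc,
      ← ENNReal.ofReal_mul (add_nonneg (hσ0 s) (mul_nonneg hγ.le (hsum0 s)))]
  · intro t A hA
    have hcm : MeasurableSet {ω | ζhat ω ≤ ζ ω} :=
      meas_aux hζm hζhatm hVm {p | p.1 ≤ p.2} MeasurableSet.univ
        (fun ω => by simp [Set.mem_setOf_eq])
    have hnull : P {ω | ζ ω < ζhat ω} = 0 := by
      have h2 : {ω | ζ ω < ζhat ω} = {ω | ζhat ω ≤ ζ ω}ᶜ := by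
        ext ω; simp [not_le]
      rw [h2, measure_compl hcm (measure_ne_top P _), hle, measure_univ, tsub_self]
    have hmEq : MeasurableSet {ω | ζhat ω = ζ ω ∧ ζ ω ≤ t ∧ V ω ∈ A} :=
      meas_aux hζm hζhatm hVm {p | p.1 = p.2 ∧ p.2 ≤ t} hA
        (fun ω => by simp only [Set.mem_setOf_eq]; tauto)
    have hmLt : MeasurableSet {ω | ζhat ω < ζ ω ∧ ζ ω ≤ t ∧ V ω ∈ A} :=
      meas_aux hζm hζhatm hVm {p | p.1 < p.2 ∧ p.2 ≤ t} hA
        (fun ω => by simp only [Set.mem_setOf_eq]; tauto)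
    have hdecomp : P {ω | ζ ω ≤ t ∧ V ω ∈ A} =
        P {ω | ζhat ω = ζ ω ∧ ζ ω ≤ t ∧ V ω ∈ A} +
          P {ω | ζhat ω < ζ ω ∧ ζ ω ≤ t ∧ V ω ∈ A} := by
      have h1 : P {ω | ζ ω ≤ t ∧ V ω ∈ A} =
          P ({ω | ζ ω ≤ t ∧ V ω ∈ A} ∩ {ω | ζhat ω ≤ ζ ω}) := by
        refine le_antisymm ?_ (measure_mono Set.inter_subset_left)
        calc P {ω | ζ ω ≤ t ∧ V ω ∈ A}
            ≤ P (({ω | ζ ω ≤ t ∧ V ω ∈ A} ∩ {ω | ζhat ω ≤ ζ ω}) ∪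
                {ω | ζ ω < ζhat ω}) := by
              apply measure_mono
              intro ω hω
              by_cases hcase : ζhat ω ≤ ζ ω
              · exact Or.inl ⟨hω, hcase⟩
              · exact Or.inr (by simpa [not_le] using hcase)
          _ ≤ P ({ω | ζ ω ≤ t ∧ V ω ∈ A} ∩ {ω | ζhat ω ≤ ζ ω}) +
                P {ω | ζ ω < ζhat ω} := measure_union_le _ _
          _ = P ({ω | ζ ω ≤ t ∧ V ω ∈ A} ∩ {ω | ζhat ω ≤ ζ ω}) := by
              rw [hnull, add_zero]
      have h2 : {ω | ζ ω ≤ t ∧ V ω ∈ A} ∩ {ω | ζhat ω ≤ ζ ω} =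
          {ω | ζhat ω = ζ ω ∧ ζ ω ≤ t ∧ V ω ∈ A} ∪
            {ω | ζhat ω < ζ ω ∧ ζ ω ≤ t ∧ V ω ∈ A} := by
        ext ω
        simp only [Set.mem_inter_iff, Set.mem_setOf_eq, Set.mem_union]
        constructor
        · rintro ⟨⟨ha, hb⟩, hc⟩
          rcases eq_or_lt_of_le hc with h | h
          · exact Or.inl ⟨h, ha, hb⟩
          · exact Or.inr ⟨h, ha, hb⟩
        · rintro (⟨h, ha, hb⟩ | ⟨h, ha, hb⟩)
          · exact ⟨⟨ha, hb⟩, le_of_eq h⟩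
          · exact ⟨⟨ha, hb⟩, le_of_lt h⟩
      have hdisj : Disjoint {ω | ζhat ω = ζ ω ∧ ζ ω ≤ t ∧ V ω ∈ A}
          {ω | ζhat ω < ζ ω ∧ ζ ω ≤ t ∧ V ω ∈ A} := by
        rw [Set.disjoint_left]
        rintro ω ⟨h1, _, _⟩ ⟨h1', _, _⟩; omega
      rw [h1, h2, measure_union hdisj hmLt]
    refine ENNReal.eq_sub_of_add_eq
      (ENNReal.mul_ne_top (measure_ne_top μ A) ENNReal.ofReal_ne_top) ?_
    rw [hdecomp, hR A hA t, mul_comm (μ A)]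
end
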